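/- arXiv:0706.1786 — 6 statements merged into one kernel-verified Lean document; each statement's English description precedes it below -/
import Mathlib

section
/- Let d ≥ 3, 1 ≤ m ≤ d-1, and Q(x) = x₁²+⋯+x_m² − x_{m+1}²−⋯−x_d². Then for any bounded set X ⊆ ℝ^d contained in the unit ball, and any 0 < ε ≤ 1, the Lebesgue volume of {x ∈ X : |Q(x)| ≤ ε} is at most a constant (depending only on d) times ε. -/
open MeasureTheory Real

private lemma ann2 {ι : Type*} [Fintype ι] [Nonempty ι] (hcard : Fintype.card ι = 2) (a b : ℝ) :
    volume {v : EuclideanSpace ℝ ι | a ≤ ‖v‖^2 ∧ ‖v‖^2 ≤ b} ≤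
      ENNReal.ofReal (Real.pi * (b - a)) := by
  rcases lt_or_ge b 0 with hb | hb
  · have : {v : EuclideanSpace ℝ ι | a ≤ ‖v‖^2 ∧ ‖v‖^2 ≤ b} = ∅ := by
      ext v; simp only [Set.mem_setOf_eq, Set.mem_empty_iff_false, iff_false]
      rintro ⟨-, h2⟩
      nlinarith [sq_nonneg ‖v‖]
    simp [this]
  · set a' := max a 0 with ha'
    rcases lt_or_ge b a' with hba | hab
    · have : {v : EuclideanSpace ℝ ι | a ≤ ‖v‖^2 ∧ ‖v‖^2 ≤ b} = ∅ := by
        ext v; simp only [Set.mem_setOf_eq, Set.mem_empty_iff_false, iff_false]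
        rintro ⟨h1, h2⟩
        have h3 : a' ≤ ‖v‖^2 := max_le h1 (sq_nonneg _)
        linarith
      simp [this]
    · have hsub : {v : EuclideanSpace ℝ ι | a ≤ ‖v‖^2 ∧ ‖v‖^2 ≤ b} ⊆
          Metric.closedBall (0 : EuclideanSpace ℝ ι) (Real.sqrt b) \
            Metric.ball 0 (Real.sqrt a') := by
        rintro v ⟨h1, h2⟩
        constructor
        · rw [Metric.mem_closedBall, dist_zero_right]
          exact (Real.le_sqrt (norm_nonneg v) hb).2 h2
        · rw [Metric.mem_ball, dist_zero_right, not_lt]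
          calc Real.sqrt a' ≤ Real.sqrt (‖v‖^2) :=
                Real.sqrt_le_sqrt (max_le h1 (sq_nonneg _))
            _ = ‖v‖ := by rw [Real.sqrt_sq (norm_nonneg v)]
      refine (measure_mono hsub).trans ?_
      have hfin : volume (Metric.ball (0 : EuclideanSpace ℝ ι) (Real.sqrt a')) ≠ ⊤ := by
        rw [EuclideanSpace.volume_ball]; exact ENNReal.mul_ne_top (by simp) (by simp)
      rw [measure_diff (Metric.ball_subset_closedBall.trans
            (Metric.closedBall_subset_closedBall (Real.sqrt_le_sqrt hab)))
          Metric.isOpen_ball.measurableSet.nullMeasurableSet hfin,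
        EuclideanSpace.volume_ball, EuclideanSpace.volume_closedBall, hcard]
      have h2 : ((2:ℕ):ℝ)/2 + 1 = 2 := by norm_num
      rw [h2, Real.Gamma_two]
      have hb' : ENNReal.ofReal (Real.sqrt b) ^ 2 = ENNReal.ofReal b := by
        rw [← ENNReal.ofReal_pow (Real.sqrt_nonneg _), Real.sq_sqrt hb]
      have ha'2 : ENNReal.ofReal (Real.sqrt a') ^ 2 = ENNReal.ofReal a' := by
        rw [← ENNReal.ofReal_pow (Real.sqrt_nonneg _), Real.sq_sqrt (le_max_right a 0)]
      have hpi : Real.sqrt Real.pi ^ (2:ℕ) / 1 = Real.pi := by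
        rw [Real.sq_sqrt Real.pi_nonneg]; ring
      rw [hb', ha'2, hpi, ← ENNReal.sub_mul (by intro _ _; simp),
        ← ENNReal.ofReal_sub _ (le_max_right a 0), ← ENNReal.ofReal_mul (sub_nonneg.2 hab)]
      refine ENNReal.ofReal_le_ofReal ?_
      have h4 := mul_nonneg Real.pi_nonneg (sub_nonneg.2 (le_max_left a 0))
      nlinarith [h4]

private lemma slice_bound {d : ℕ} (i j : Fin d) (hij : i ≠ j) (a b : ℝ) :
    volume {u : {k : Fin d // k = i ∨ k = j} → ℝ |
        a ≤ (u ⟨i, Or.inl rfl⟩)^2 + (u ⟨j, Or.inr rfl⟩)^2 ∧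
          (u ⟨i, Or.inl rfl⟩)^2 + (u ⟨j, Or.inr rfl⟩)^2 ≤ b} ≤
      ENNReal.ofReal (Real.pi * (b - a)) := by
  set κ := {k : Fin d // k = i ∨ k = j}
  haveI : Nonempty κ := ⟨⟨i, Or.inl rfl⟩⟩
  set ii : κ := ⟨i, Or.inl rfl⟩
  set jj : κ := ⟨j, Or.inr rfl⟩
  have hiijj : ii ≠ jj := fun h => hij (congrArg Subtype.val h)
  have huniv : (Finset.univ : Finset κ) = {ii, jj} := by
    ext k
    simp only [Finset.mem_univ, Finset.mem_insert, Finset.mem_singleton, true_iff]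
    rcases k.2 with h | h
    · exact Or.inl (Subtype.ext h)
    · exact Or.inr (Subtype.ext h)
  have hcard : Fintype.card κ = 2 := by
    rw [← Finset.card_univ, huniv, Finset.card_pair hiijj]
  have hmeas : MeasurableSet {u : κ → ℝ |
      a ≤ (u ii)^2 + (u jj)^2 ∧ (u ii)^2 + (u jj)^2 ≤ b} := by
    apply MeasurableSet.inter
    · exact measurableSet_le measurable_const
        (((measurable_pi_apply ii).pow_const 2).add ((measurable_pi_apply jj).pow_const 2))
    · exact measurableSet_le
        (((measurable_pi_apply ii).pow_const 2).add ((measurable_pi_apply jj).pow_const 2))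
        measurable_const
  rw [← (EuclideanSpace.volume_preserving_symm_measurableEquiv_toLp κ).measure_preimage
    hmeas.nullMeasurableSet]
  have hset : (MeasurableEquiv.toLp 2 (κ → ℝ)).symm ⁻¹'
      {u : κ → ℝ | a ≤ (u ii)^2 + (u jj)^2 ∧ (u ii)^2 + (u jj)^2 ≤ b} =
      {v : EuclideanSpace ℝ κ | a ≤ ‖v‖^2 ∧ ‖v‖^2 ≤ b} := by
    ext v
    have hnorm : ‖v‖^2 = (v ii)^2 + (v jj)^2 := by
      rw [EuclideanSpace.norm_eq, Real.sq_sqrt (by positivity)]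
      rw [show (Finset.univ : Finset κ) = {ii, jj} from huniv,
        Finset.sum_pair hiijj]
      simp [sq_abs]
    simp only [Set.mem_preimage, Set.mem_setOf_eq, hnorm]
    rfl
  rw [hset]
  exact ann2 hcard a b

private lemma coord_le_norm {d : ℕ} (x : EuclideanSpace ℝ (Fin d)) (k : Fin d) : |x k| ≤ ‖x‖ := by
  rw [EuclideanSpace.norm_eq, ← Real.sqrt_sq_eq_abs]
  apply Real.sqrt_le_sqrt
  apply Finset.single_le_sum (f := fun l => ‖x l‖^2) (fun l _ => by positivity)
    (Finset.mem_univ k) |>.trans_eq' ?_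
  simp [Real.norm_eq_abs, sq_abs]

lemma key {d m : ℕ} (i j : Fin d) (hij : i ≠ j) (hsame : ((i:ℕ) < m ↔ (j:ℕ) < m))
    (X : Set (EuclideanSpace ℝ (Fin d))) (hX : ∀ x ∈ X, ‖x‖ ≤ 1)
    (ε : ℝ) (hε : 0 < ε) :
    volume {x ∈ X | |∑ k : Fin d, (if (k:ℕ) < m then (x k)^2 else -((x k)^2))| ≤ ε} ≤
      ENNReal.ofReal ((2*Real.pi*2^d) * ε) := by
  set p : Fin d → Prop := fun k => k = i ∨ k = j with hp
  set ii : {k // p k} := ⟨i, Or.inl rfl⟩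
  set jj : {k // p k} := ⟨j, Or.inr rfl⟩
  set ς : ℝ := if (i:ℕ) < m then 1 else -1 with hς
  have hς2 : ς * ς = 1 := by by_cases hi : (i:ℕ) < m <;> simp [hς, hi]
  have hςabs : |ς| = 1 := by by_cases hi : (i:ℕ) < m <;> simp [hς, hi]
  set R2 : ({k // ¬ p k} → ℝ) → ℝ :=
    fun z => ∑ k : {k // ¬ p k}, (if ((k : Fin d) : ℕ) < m then (z k)^2 else -((z k)^2)) with hR2
  set E : Set (({k // p k} → ℝ) × ({k // ¬ p k} → ℝ)) :=
    {y | (∀ k, |y.2 k| ≤ 1) ∧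
      (-ς * R2 y.2 - ε ≤ (y.1 ii)^2 + (y.1 jj)^2 ∧
        (y.1 ii)^2 + (y.1 jj)^2 ≤ -ς * R2 y.2 + ε)} with hE
  have hR2meas : Measurable R2 := by
    apply Finset.measurable_sum
    intro k _
    split
    · exact (measurable_pi_apply k).pow_const 2
    · exact ((measurable_pi_apply k).pow_const 2).neg
  have h1meas : MeasurableSet {y : ({k // p k} → ℝ) × ({k // ¬ p k} → ℝ) |
      ∀ k, |y.2 k| ≤ 1} := by
    have heq : {y : ({k // p k} → ℝ) × ({k // ¬ p k} → ℝ) | ∀ k, |y.2 k| ≤ 1} =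
        ⋂ k, {y | |y.2 k| ≤ 1} := by ext y; simp
    rw [heq]
    exact MeasurableSet.iInter fun k =>
      measurableSet_le (measurable_snd.eval.abs) measurable_const
  have hsmeas : Measurable fun y : ({k // p k} → ℝ) × ({k // ¬ p k} → ℝ) =>
      (y.1 ii)^2 + (y.1 jj)^2 :=
    (((measurable_pi_apply ii).comp measurable_fst).pow_const 2).add
      (((measurable_pi_apply jj).comp measurable_fst).pow_const 2)
  have hcmeas : Measurable fun y : ({k // p k} → ℝ) × ({k // ¬ p k} → ℝ) =>
      -ς * R2 y.2 := (hR2meas.comp measurable_snd).const_mul _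
  have hEmeas : MeasurableSet E :=
    h1meas.inter ((measurableSet_le (hcmeas.sub measurable_const) hsmeas).inter
      (measurableSet_le hsmeas (hcmeas.add measurable_const)))
  set F : EuclideanSpace ℝ (Fin d) → ({k // p k} → ℝ) × ({k // ¬ p k} → ℝ) :=
    fun x => (MeasurableEquiv.piEquivPiSubtypeProd (fun _ : Fin d => ℝ) p)
      ((MeasurableEquiv.toLp 2 (Fin d → ℝ)).symm x) with hF
  have hFmp : MeasurePreserving F volume volume :=
    (volume_preserving_piEquivPiSubtypeProd (fun _ : Fin d => ℝ) p).comp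
      (EuclideanSpace.volume_preserving_symm_measurableEquiv_toLp (Fin d))
  have hincl : {x ∈ X | |∑ k : Fin d, (if (k:ℕ) < m then (x k)^2 else -((x k)^2))| ≤ ε}
      ⊆ F ⁻¹' E := by
    rintro x ⟨hxX, hxQ⟩
    have hxn : ‖x‖ ≤ 1 := hX x hxX
    constructor
    · intro k
      exact (coord_le_norm x k).trans hxn
    · set f : Fin d → ℝ := fun k => if (k:ℕ) < m then (x k)^2 else -((x k)^2) with hf
      have hsplit : ∑ k : Fin d, f k =
          ∑ k ∈ Finset.univ \ {i, j}, f k + ∑ k ∈ ({i, j} : Finset (Fin d)), f k :=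
        (Finset.sum_sdiff (Finset.subset_univ _)).symm
      have hpair : ∑ k ∈ ({i, j} : Finset (Fin d)), f k = ς * ((x i)^2 + (x j)^2) := by
        rw [Finset.sum_pair hij]
        by_cases hi : (i:ℕ) < m
        · simp only [hf, hς, if_pos hi, if_pos (hsame.1 hi)]; ring
        · have hj : ¬ ((j:ℕ) < m) := fun h => hi (hsame.2 h)
          simp only [hf, hς, if_neg hi, if_neg hj]; ring
      have hrest : ∑ k ∈ Finset.univ \ {i, j}, f k = R2 (fun k => x k) := by
        rw [hR2]
        exact Finset.sum_subtype _ (fun k => by simp [hp, or_comm]) f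
      have hQ : ∑ k : Fin d, f k = ς * ((x i)^2 + (x j)^2) + R2 (fun k => x k) := by
        rw [hsplit, hpair, hrest]; ring
      have habs : |(x i)^2 + (x j)^2 + ς * R2 (fun k => x k)| ≤ ε := by
        have heq : (x i)^2 + (x j)^2 + ς * R2 (fun k => x k) = ς * ∑ k : Fin d, f k := by
          rw [hQ]; nlinarith [hς2]
        rw [heq, abs_mul, hςabs, one_mul]
        exact hxQ
      rw [abs_le] at habs
      constructor
      · show -ς * R2 (fun k : {k // ¬ p k} => x k) - ε ≤ (x i)^2 + (x j)^2
        linarith [habs.1]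
      · show (x i)^2 + (x j)^2 ≤ -ς * R2 (fun k : {k // ¬ p k} => x k) + ε
        linarith [habs.2]
  refine (measure_mono hincl).trans ?_
  rw [hFmp.measure_preimage hEmeas.nullMeasurableSet]
  rw [show (volume : Measure (({k // p k} → ℝ) × ({k // ¬ p k} → ℝ))) =
    (volume : Measure ({k // p k} → ℝ)).prod volume from rfl,
    Measure.prod_apply_symm hEmeas]
  set B : Set ({k // ¬ p k} → ℝ) := {z | ∀ k, |z k| ≤ 1} with hB
  have hBmeas : MeasurableSet B := by
    have heq : B = ⋂ k, {z : {k // ¬ p k} → ℝ | |z k| ≤ 1} := by ext z; simp [hB]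
    rw [heq]
    exact MeasurableSet.iInter fun k =>
      measurableSet_le (measurable_pi_apply k).abs measurable_const
  have hpt : ∀ z, volume ((fun u => (u, z)) ⁻¹' E) ≤
      B.indicator (fun _ => ENNReal.ofReal (Real.pi * (2*ε))) z := by
    intro z
    by_cases hz : z ∈ B
    · rw [Set.indicator_of_mem hz]
      have heq : ((fun u => (u, z)) ⁻¹' E) = {u : {k // p k} → ℝ |
          -ς * R2 z - ε ≤ (u ii)^2 + (u jj)^2 ∧ (u ii)^2 + (u jj)^2 ≤ -ς * R2 z + ε} := by
        ext u
        simp only [hE, Set.mem_preimage, Set.mem_setOf_eq]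
        exact and_iff_right hz
      rw [heq]
      refine (slice_bound i j hij _ _).trans ?_
      exact ENNReal.ofReal_le_ofReal (le_of_eq (by ring))
    · rw [Set.indicator_of_notMem hz]
      have heq : ((fun u => (u, z)) ⁻¹' E) = ∅ := by
        ext u
        simp only [hE, Set.mem_preimage, Set.mem_setOf_eq, Set.mem_empty_iff_false, iff_false]
        rintro ⟨h1, -⟩
        exact hz h1
      simp [heq]
  refine (lintegral_mono hpt).trans ?_
  rw [lintegral_indicator_const hBmeas]
  have hBvol : volume B = ENNReal.ofReal 2 ^ Fintype.card {k // ¬ p k} := by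
    have heq : B = Set.pi Set.univ fun _ : {k // ¬ p k} => Set.Icc (-1:ℝ) 1 := by
      ext z; simp [hB, Set.mem_pi, abs_le, Pi.le_def, forall_and]
    rw [heq, volume_pi_pi]
    simp [Real.volume_Icc]
    norm_num
  rw [hBvol]
  have hcard : Fintype.card {k // ¬ p k} ≤ d := by
    simpa using Fintype.card_subtype_le (fun k : Fin d => ¬ p k)
  calc ENNReal.ofReal (Real.pi * (2*ε)) * ENNReal.ofReal 2 ^ Fintype.card {k // ¬ p k}
      ≤ ENNReal.ofReal (Real.pi * (2*ε)) * ENNReal.ofReal 2 ^ d := by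
        gcongr
        · exact ENNReal.one_le_ofReal.2 one_le_two
    _ = ENNReal.ofReal ((2*Real.pi*2^d) * ε) := by
        rw [← ENNReal.ofReal_pow (by norm_num), ← ENNReal.ofReal_mul (by positivity)]
        congr 1
        ring


/-- Let `d ≥ 3`, `1 ≤ m ≤ d-1`, and
`Q(x) = x₁²+⋯+x_m² − x_{m+1}²−⋯−x_d²`.  For any set `X` contained in the unit ball of
`ℝ^d` and any `0 < ε ≤ 1`, the Lebesgue volume of `{x ∈ X : |Q(x)| ≤ ε}` is at most a
constant (depending only on `d`) times `ε`. -/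
theorem stmt3 (d m : ℕ) (hd : 3 ≤ d) (hm : 1 ≤ m) (hmd : m ≤ d - 1) :
    ∃ C : ℝ, 0 < C ∧
      ∀ X : Set (EuclideanSpace ℝ (Fin d)), (∀ x ∈ X, ‖x‖ ≤ 1) →
        ∀ ε : ℝ, 0 < ε → ε ≤ 1 →
          volume {x ∈ X |
              |∑ i : Fin d, (if (i : ℕ) < m then (x i) ^ 2 else -((x i) ^ 2))| ≤ ε} ≤
            ENNReal.ofReal (C * ε) := by
  refine ⟨2 * Real.pi * 2 ^ d, by positivity, ?_⟩
  intro X hX ε hε _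
  by_cases h2m : 2 ≤ m
  · exact key (⟨0, by omega⟩ : Fin d) (⟨1, by omega⟩ : Fin d)
      (by simp [Fin.ext_iff]) (iff_of_true (by simpa using by omega) (by simpa using by omega))
      X hX ε hε
  · have hm1 : m = 1 := by omega
    exact key (⟨1, by omega⟩ : Fin d) (⟨2, by omega⟩ : Fin d)
      (by simp [Fin.ext_iff]) (iff_of_false (by simpa using by omega) (by simpa using by omega))
      X hX ε hε
end

section
/- Let d ≥ 3, 1 ≤ m ≤ d-1, and Q(k) = k₁²+⋯+k_m² − k_{m+1}²−⋯−k_d². There is a constant C (depending only on d) such that for all q ∈ ℝ^d, all integers j ≤ 0, all 0 < ε < 1/2 and all M > 1, vol{k ∈ ℝ^d : |Q(k)| ≤ M^j, |k - q| ≤ M^{εj}} ≤ C · M^j · M^{(d-2)εj}. -/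
open MeasureTheory

private lemma annulus_euclid (t δ : ℝ) (hδ : 0 ≤ δ) :
    volume {z : EuclideanSpace ℝ (Fin 2) | (∑ i, (z i)^2) ∈ Set.Icc t (t + 2*δ)} ≤
      ENNReal.ofReal (8*δ) := by
  rcases lt_or_ge (t + 2*δ) 0 with h | h
  · have he : {z : EuclideanSpace ℝ (Fin 2) | (∑ i, (z i)^2) ∈ Set.Icc t (t + 2*δ)} = ∅ := by
      ext z
      simp only [Set.mem_setOf_eq, Set.mem_Icc, Set.mem_empty_iff_false, iff_false, not_and,
        not_le]
      intro _
      have : (0:ℝ) ≤ ∑ i, (z i)^2 := Finset.sum_nonneg fun i _ => sq_nonneg _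
      linarith
    rw [he]; simp
  · set R := Real.sqrt (t + 2*δ) with hR
    set R' := Real.sqrt (max t 0) with hR'
    have hmax : max t 0 ≤ t + 2*δ := by
      rcases le_total t 0 with ht | ht
      · rw [max_eq_right ht]; linarith
      · rw [max_eq_left ht]; linarith
    have hRR' : R' ≤ R := Real.sqrt_le_sqrt hmax
    have hnorm : ∀ z : EuclideanSpace ℝ (Fin 2), ‖z‖ = Real.sqrt (∑ i, (z i)^2) := by
      intro z
      rw [EuclideanSpace.norm_eq]
      congr 1
      refine Finset.sum_congr rfl fun i _ => ?_
      rw [Real.norm_eq_abs, sq_abs]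
    have hsub : {z : EuclideanSpace ℝ (Fin 2) | (∑ i, (z i)^2) ∈ Set.Icc t (t + 2*δ)} ⊆
        Metric.closedBall 0 R \ Metric.ball 0 R' := by
      intro z hz
      obtain ⟨h1, h2⟩ := hz
      have hz0 : (0:ℝ) ≤ ∑ i, (z i)^2 := Finset.sum_nonneg fun i _ => sq_nonneg _
      constructor
      · rw [Metric.mem_closedBall, dist_zero_right, hnorm]
        exact Real.sqrt_le_sqrt h2
      · rw [Metric.mem_ball, dist_zero_right, hnorm, not_lt]
        exact Real.sqrt_le_sqrt (max_le h1 hz0)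
    refine le_trans (measure_mono hsub) ?_
    have hball : volume (Metric.ball (0:EuclideanSpace ℝ (Fin 2)) R') ≠ ⊤ :=
      measure_ball_lt_top.ne
    rw [measure_diff (Metric.ball_subset_closedBall.trans
        (Metric.closedBall_subset_closedBall hRR')) measurableSet_ball.nullMeasurableSet hball]
    rw [EuclideanSpace.volume_closedBall, EuclideanSpace.volume_ball]
    have hC : ENNReal.ofReal (Real.sqrt Real.pi ^ Fintype.card (Fin 2) /
        Real.Gamma (Fintype.card (Fin 2) / 2 + 1)) = ENNReal.ofReal Real.pi := by
      norm_num [Real.sq_sqrt Real.pi_nonneg, Real.Gamma_two]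
    rw [hC]
    have hRsq : (ENNReal.ofReal R) ^ Fintype.card (Fin 2) = ENNReal.ofReal (t + 2*δ) := by
      rw [Fintype.card_fin, ← ENNReal.ofReal_pow (Real.sqrt_nonneg _), Real.sq_sqrt h]
    have hR'sq : (ENNReal.ofReal R') ^ Fintype.card (Fin 2) = ENNReal.ofReal (max t 0) := by
      rw [Fintype.card_fin, ← ENNReal.ofReal_pow (Real.sqrt_nonneg _),
        Real.sq_sqrt (le_max_right t 0)]
    rw [hRsq, hR'sq]
    rw [tsub_le_iff_right]
    calc ENNReal.ofReal (t + 2*δ) * ENNReal.ofReal Real.pi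
        ≤ (ENNReal.ofReal (max t 0) + ENNReal.ofReal (2*δ)) * ENNReal.ofReal Real.pi := by
          refine mul_le_mul_left ?_ _
          rw [← ENNReal.ofReal_add (le_max_right t 0) (by positivity)]
          exact ENNReal.ofReal_le_ofReal (by linarith [le_max_left t 0])
      _ = ENNReal.ofReal (max t 0) * ENNReal.ofReal Real.pi
            + ENNReal.ofReal (2*δ) * ENNReal.ofReal Real.pi := by rw [add_mul]
      _ ≤ ENNReal.ofReal (max t 0) * ENNReal.ofReal Real.pi + ENNReal.ofReal (8*δ) := by
          gcongr
          rw [← ENNReal.ofReal_mul (by positivity)]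
          exact ENNReal.ofReal_le_ofReal (by nlinarith [Real.pi_le_four])
      _ ≤ ENNReal.ofReal (8*δ) + ENNReal.ofReal (max t 0) * ENNReal.ofReal Real.pi := by
          rw [add_comm]

private lemma annulus_pi {ι : Type} [Fintype ι] (h2 : Fintype.card ι = 2) (t δ : ℝ)
    (hδ : 0 ≤ δ) :
    (volume : Measure (ι → ℝ)) {y | (∑ i, (y i)^2) ∈ Set.Icc t (t + 2*δ)} ≤
      ENNReal.ofReal (8*δ) := by
  have e : Fin 2 ≃ ι := (Fintype.equivFinOfCardEq h2).symm
  have hmeassum : Measurable fun y : ι → ℝ => ∑ i, (y i)^2 :=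
    Finset.measurable_sum _ fun i _ => (measurable_pi_apply i).pow_const 2
  have hmeas : MeasurableSet {y : ι → ℝ | (∑ i, (y i)^2) ∈ Set.Icc t (t + 2*δ)} :=
    hmeassum measurableSet_Icc
  have hmp := MeasureTheory.volume_measurePreserving_piCongrLeft (fun _ : ι => ℝ) e
  rw [← hmp.measure_preimage hmeas.nullMeasurableSet]
  have hset : (MeasurableEquiv.piCongrLeft (fun _ : ι => ℝ) e) ⁻¹'
      {y : ι → ℝ | (∑ i, (y i)^2) ∈ Set.Icc t (t + 2*δ)}
      = {w : Fin 2 → ℝ | (∑ i, (w i)^2) ∈ Set.Icc t (t + 2*δ)} := by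
    ext w
    simp only [Set.mem_preimage, Set.mem_setOf_eq]
    have hsum : ∑ i : ι, ((MeasurableEquiv.piCongrLeft (fun _ : ι => ℝ) e) w i)^2
        = ∑ j : Fin 2, (w j)^2 := by
      rw [← Equiv.sum_comp e (fun i => ((MeasurableEquiv.piCongrLeft (fun _ : ι => ℝ) e) w i)^2)]
      refine Finset.sum_congr rfl fun j _ => ?_
      rw [MeasurableEquiv.piCongrLeft_apply_apply]
    rw [hsum]
  rw [hset]
  have hmeas2 : MeasurableSet {w : Fin 2 → ℝ | (∑ i, (w i)^2) ∈ Set.Icc t (t + 2*δ)} :=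
    (Finset.measurable_sum _ fun i _ => (measurable_pi_apply i).pow_const 2) measurableSet_Icc
  have hmp2 := EuclideanSpace.volume_preserving_symm_measurableEquiv_toLp (Fin 2)
  rw [← hmp2.measure_preimage hmeas2.nullMeasurableSet]
  have hset2 : (MeasurableEquiv.toLp 2 (Fin 2 → ℝ)).symm ⁻¹'
      {w : Fin 2 → ℝ | (∑ i, (w i)^2) ∈ Set.Icc t (t + 2*δ)}
      = {z : EuclideanSpace ℝ (Fin 2) | (∑ i, (z i)^2) ∈ Set.Icc t (t + 2*δ)} := by
    rfl
  rw [hset2]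
  exact annulus_euclid t δ hδ

private lemma key_bound (d m : ℕ) (hd2 : 2 ≤ d) (i₁ i₂ : Fin d) (hne : i₁ ≠ i₂)
    (hsign : ((i₁:ℕ) < m ∧ (i₂:ℕ) < m) ∨ (¬((i₁:ℕ) < m) ∧ ¬((i₂:ℕ) < m)))
    (q : EuclideanSpace ℝ (Fin d)) (δ r : ℝ) (hδ : 0 ≤ δ) (hr : 0 ≤ r) :
    volume {k : EuclideanSpace ℝ (Fin d) |
        |∑ i : Fin d, (if (i : ℕ) < m then (k i) ^ 2 else -((k i) ^ 2))| ≤ δ ∧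
        dist k q ≤ r} ≤
      ENNReal.ofReal (8 * δ) * ENNReal.ofReal (2*r) ^ (d - 2) := by
  classical
  set Q : (Fin d → ℝ) → ℝ :=
    fun k => ∑ i : Fin d, (if (i : ℕ) < m then (k i) ^ 2 else -((k i) ^ 2)) with hQdef
  set T : Set (Fin d → ℝ) :=
    Q ⁻¹' Set.Icc (-δ) δ ∩ Set.pi Set.univ (fun i => Set.Icc (q i - r) (q i + r)) with hTdef
  have hQmeas : Measurable Q := by
    refine Finset.measurable_sum _ fun i _ => ?_
    have h1 : Measurable fun k : Fin d → ℝ => (k i)^2 := (measurable_pi_apply i).pow_const 2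
    by_cases h : (i : ℕ) < m
    · simp only [if_pos h]; exact h1
    · simp only [if_neg h]; exact h1.neg
  have hTmeas : MeasurableSet T :=
    (hQmeas measurableSet_Icc).inter (MeasurableSet.univ_pi fun i => measurableSet_Icc)
  -- step A : the set is contained in the preimage of T
  have hsubset : {k : EuclideanSpace ℝ (Fin d) |
        |∑ i : Fin d, (if (i : ℕ) < m then (k i) ^ 2 else -((k i) ^ 2))| ≤ δ ∧
        dist k q ≤ r} ⊆ (MeasurableEquiv.toLp 2 (Fin d → ℝ)).symm ⁻¹' T := by
    intro k hk
    obtain ⟨h1, h2⟩ := hk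
    constructor
    · exact Set.mem_Icc.mpr (abs_le.mp h1)
    · intro i _
      have hcoord : |k i - q i| ≤ dist k q := by
        rw [← Real.sqrt_sq_eq_abs, EuclideanSpace.dist_eq]
        apply Real.sqrt_le_sqrt
        have h0 := Finset.single_le_sum (f := fun j => dist (k j) (q j)^2)
          (fun j _ => sq_nonneg _) (Finset.mem_univ i)
        calc (k i - q i)^2 = dist (k i) (q i)^2 := by rw [Real.dist_eq, sq_abs]
          _ ≤ _ := h0
      have hab2 := abs_le.mp (hcoord.trans h2)
      show k i ∈ Set.Icc (q i - r) (q i + r)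
      exact Set.mem_Icc.mpr ⟨by linarith [hab2.1], by linarith [hab2.2]⟩
  refine le_trans (measure_mono hsubset) ?_
  rw [(EuclideanSpace.volume_preserving_symm_measurableEquiv_toLp (Fin d)).measure_preimage
    hTmeas.nullMeasurableSet]
  -- step B : split off the two coordinates i₁ i₂
  set p : Fin d → Prop := fun i => i ≠ i₁ ∧ i ≠ i₂ with hpdef
  have hF := volume_preserving_piEquivPiSubtypeProd (fun _ : Fin d => ℝ) p
  have hG := hF.symm (MeasurableEquiv.piEquivPiSubtypeProd (fun _ : Fin d => ℝ) p)
  set G := (MeasurableEquiv.piEquivPiSubtypeProd (fun _ : Fin d => ℝ) p).symm with hGdef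
  rw [← hG.measure_preimage hTmeas.nullMeasurableSet]
  have hGTmeas : MeasurableSet (G ⁻¹' T) := G.measurable hTmeas
  rw [Measure.volume_eq_prod, Measure.prod_apply hGTmeas]
  -- basic facts about the index types
  have hpi₁ : ¬ p i₁ := by simp [hpdef]
  have hpi₂ : ¬ p i₂ := by simp [hpdef]
  set a : {i // ¬ p i} := ⟨i₁, hpi₁⟩ with hadef
  set b : {i // ¬ p i} := ⟨i₂, hpi₂⟩ with hbdef
  have hab : a ≠ b := fun h => hne (congrArg Subtype.val h)
  have huniv : ({a, b} : Finset {i // ¬ p i}) = Finset.univ := by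
    refine Finset.eq_univ_iff_forall.mpr fun c => ?_
    obtain ⟨c, hc⟩ := c
    have hc' : c = i₁ ∨ c = i₂ := by
      by_contra hcon
      push_neg at hcon
      exact hc ⟨hcon.1, hcon.2⟩
    simp only [Finset.mem_insert, Finset.mem_singleton]
    rcases hc' with h | h
    · exact Or.inl (Subtype.ext h)
    · exact Or.inr (Subtype.ext h)
  have hcardp : Fintype.card {i // p i} = d - 2 := by
    rw [Fintype.card_subtype]
    have hfil : Finset.univ.filter p = Finset.univ \ ({i₁, i₂} : Finset (Fin d)) := by
      ext i
      simp [hpdef, not_or]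
    rw [hfil, Finset.card_sdiff_of_subset (Finset.subset_univ _), Finset.card_univ, Fintype.card_fin,
      Finset.card_pair hne]
  have hcardnp : Fintype.card {i // ¬ p i} = 2 := by
    rw [Fintype.card_subtype_compl, Fintype.card_fin, hcardp]
    omega
  -- the box for the remaining coordinates
  set Box : Set ({i // p i} → ℝ) :=
    Set.pi Set.univ (fun i : {i // p i} => Set.Icc (q i.1 - r) (q i.1 + r)) with hBoxdef
  have hBoxmeas : MeasurableSet Box := MeasurableSet.univ_pi fun i => measurableSet_Icc
  -- pointwise bound on slices
  have hslice : ∀ x : ({i // p i} → ℝ), volume (Prod.mk x ⁻¹' (G ⁻¹' T)) ≤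
      Box.indicator (fun _ => ENNReal.ofReal (8*δ)) x := by
    intro x
    have hkx : ∀ (y : {i // ¬ p i} → ℝ) (i : Fin d) (h : p i), G (x, y) i = x ⟨i, h⟩ := by
      intro y i h
      simp only [hGdef, MeasurableEquiv.piEquivPiSubtypeProd, MeasurableEquiv.symm,
        MeasurableEquiv.coe_mk, Equiv.piEquivPiSubtypeProd_symm_apply]
      exact dif_pos h
    have hka : ∀ (y : {i // ¬ p i} → ℝ), G (x, y) i₁ = y a := by
      intro y
      simp [hGdef, MeasurableEquiv.piEquivPiSubtypeProd, Equiv.piEquivPiSubtypeProd, hpi₁, hadef]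
    have hkb : ∀ (y : {i // ¬ p i} → ℝ), G (x, y) i₂ = y b := by
      intro y
      simp [hGdef, MeasurableEquiv.piEquivPiSubtypeProd, Equiv.piEquivPiSubtypeProd, hpi₂, hbdef]
    by_cases hx : x ∈ Box
    · rw [Set.indicator_of_mem hx]
      set Rest : ℝ := ∑ i ∈ Finset.univ \ ({i₁, i₂} : Finset (Fin d)),
        (if h : p i then (if (i:ℕ) < m then (x ⟨i,h⟩)^2 else -((x ⟨i,h⟩)^2)) else 0) with hRest
      -- the Q-value splits
      have hsplit : ∀ y : {i // ¬ p i} → ℝ, Q (G (x, y)) =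
          (if (i₁:ℕ) < m then (y a)^2 else -((y a)^2)) +
          (if (i₂:ℕ) < m then (y b)^2 else -((y b)^2)) + Rest := by
        intro y
        simp only [hQdef]
        rw [← Finset.sum_sdiff (Finset.subset_univ ({i₁, i₂} : Finset (Fin d)))]
        rw [Finset.sum_pair hne]
        have hrest : ∑ i ∈ Finset.univ \ ({i₁, i₂} : Finset (Fin d)),
            (if (i : ℕ) < m then (G (x, y) i) ^ 2 else -((G (x, y) i) ^ 2)) = Rest := by
          rw [hRest]
          refine Finset.sum_congr rfl fun i hi => ?_
          have hp : p i := by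
            rw [Finset.mem_sdiff] at hi
            simp only [Finset.mem_insert, Finset.mem_singleton, not_or] at hi
            exact ⟨hi.2.1, hi.2.2⟩
          rw [hkx y i hp, dif_pos hp]
        rw [hrest, hka y, hkb y]
        ring
      -- choose the annulus center
      obtain ⟨t₀, ht₀⟩ : ∃ t₀ : ℝ, (Prod.mk x ⁻¹' (G ⁻¹' T)) ⊆
          {y : {i // ¬ p i} → ℝ | (∑ i, (y i)^2) ∈ Set.Icc t₀ (t₀ + 2*δ)} := by
        rcases hsign with ⟨hs₁, hs₂⟩ | ⟨hs₁, hs₂⟩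
        · refine ⟨-δ - Rest, fun y hy => ?_⟩
          have hQy := hy.1
          rw [Set.mem_preimage, Set.mem_Icc] at hQy
          have := hsplit y
          rw [if_pos hs₁, if_pos hs₂] at this
          have hsum : ∑ i, (y i)^2 = (y a)^2 + (y b)^2 := by
            rw [← huniv, Finset.sum_pair hab]
          rw [Set.mem_setOf_eq, hsum, Set.mem_Icc]
          constructor <;> [linarith [hQy.1, this]; linarith [hQy.2, this]]
        · refine ⟨Rest - δ, fun y hy => ?_⟩
          have hQy := hy.1
          rw [Set.mem_preimage, Set.mem_Icc] at hQy
          have := hsplit y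
          rw [if_neg hs₁, if_neg hs₂] at this
          have hsum : ∑ i, (y i)^2 = (y a)^2 + (y b)^2 := by
            rw [← huniv, Finset.sum_pair hab]
          rw [Set.mem_setOf_eq, hsum, Set.mem_Icc]
          constructor <;> [linarith [hQy.2, this]; linarith [hQy.1, this]]
      exact le_trans (measure_mono ht₀) (annulus_pi hcardnp t₀ δ hδ)
    · rw [Set.indicator_of_notMem hx]
      have hempty : (Prod.mk x ⁻¹' (G ⁻¹' T)) = ∅ := by
        rw [Set.eq_empty_iff_forall_notMem]
        intro y hy
        apply hx
        intro i _
        have := hy.2 i.1 (Set.mem_univ _)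
        rwa [hkx y i.1 i.2] at this
      rw [hempty]
      simp
  calc ∫⁻ x, volume (Prod.mk x ⁻¹' (G ⁻¹' T))
      ≤ ∫⁻ x, Box.indicator (fun _ => ENNReal.ofReal (8*δ)) x := lintegral_mono hslice
    _ = ENNReal.ofReal (8*δ) * volume Box := by
        rw [lintegral_indicator hBoxmeas, setLIntegral_const]
    _ = ENNReal.ofReal (8 * δ) * ENNReal.ofReal (2*r) ^ (d - 2) := by
        congr 1
        rw [hBoxdef, volume_pi_pi]
        have : ∀ i : {i // p i}, volume (Set.Icc (q i.1 - r) (q i.1 + r))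
            = ENNReal.ofReal (2*r) := by
          intro i
          rw [Real.volume_Icc]
          congr 1
          ring
        rw [Finset.prod_congr rfl fun i _ => this i, Finset.prod_const, Finset.card_univ,
          hcardp]


/-- Let `d ≥ 3`, `1 ≤ m ≤ d-1`, and `Q` the quadratic form of signature
`(m, d-m)`.  There is a constant `C` (depending only on `d`) such that for all
`q ∈ ℝ^d`, all integers `j ≤ 0`, all `0 < ε < 1/2` and all `M > 1`,
`vol{k : |Q(k)| ≤ M^j, |k-q| ≤ M^{εj}} ≤ C M^j M^{(d-2)εj}`. -/
theorem stmt6 (d m : ℕ) (hd : 3 ≤ d) (hm : 1 ≤ m) (hmd : m ≤ d - 1) :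
    ∃ C : ℝ, 0 < C ∧
      ∀ (q : EuclideanSpace ℝ (Fin d)) (j : ℤ), j ≤ 0 →
        ∀ ε : ℝ, 0 < ε → ε < 1 / 2 → ∀ M : ℝ, 1 < M →
          volume {k : EuclideanSpace ℝ (Fin d) |
              |∑ i : Fin d, (if (i : ℕ) < m then (k i) ^ 2 else -((k i) ^ 2))| ≤ M ^ j ∧
              dist k q ≤ M ^ (ε * (j : ℝ))} ≤
            ENNReal.ofReal (C * M ^ j * M ^ (((d : ℝ) - 2) * ε * (j : ℝ))) := by
  refine ⟨2^(d+1), by positivity, ?_⟩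
  intro q j hj ε hε hε2 M hM
  have hM0 : (0:ℝ) < M := lt_trans one_pos hM
  have hδ0 : (0:ℝ) ≤ M ^ j := (zpow_pos hM0 j).le
  have hr0 : (0:ℝ) ≤ M ^ (ε * (j:ℝ)) := (Real.rpow_pos_of_pos hM0 _).le
  obtain ⟨i₁, i₂, hne, hsign⟩ : ∃ i₁ i₂ : Fin d, i₁ ≠ i₂ ∧
      (((i₁:ℕ) < m ∧ (i₂:ℕ) < m) ∨ (¬((i₁:ℕ) < m) ∧ ¬((i₂:ℕ) < m))) := by
    by_cases hm2 : 2 ≤ m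
    · refine ⟨⟨0, by omega⟩, ⟨1, by omega⟩, ?_, Or.inl ⟨?_, ?_⟩⟩
      · simp [Fin.ext_iff]
      · exact hm
      · exact hm2
    · refine ⟨⟨d-1, by omega⟩, ⟨d-2, by omega⟩, ?_, Or.inr ⟨?_, ?_⟩⟩
      · simp only [ne_eq, Fin.mk.injEq]
        omega
      · simp only []
        omega
      · simp only []
        omega
  refine le_trans (key_bound d m (by omega) i₁ i₂ hne hsign q _ _ hδ0 hr0) ?_
  rw [← ENNReal.ofReal_pow (by positivity), ← ENNReal.ofReal_mul (by positivity)]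
  apply ENNReal.ofReal_le_ofReal
  have hpow : (M ^ (ε * (j:ℝ))) ^ (d - 2) = M ^ (((d:ℝ) - 2) * ε * (j:ℝ)) := by
    rw [← Real.rpow_natCast (M ^ (ε * (j:ℝ))) (d-2), ← Real.rpow_mul hM0.le]
    congr 1
    have hcast : ((d - 2 : ℕ) : ℝ) = (d:ℝ) - 2 := by
      rw [Nat.cast_sub (by omega : 2 ≤ d)]
      norm_num
    rw [hcast]
    ring
  rw [mul_pow, hpow]
  have h8 : (8:ℝ) * 2^(d-2) = 2^(d+1) := by
    have hdd : d + 1 = 3 + (d - 2) := by omega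
    rw [hdd, pow_add]
    norm_num
  apply le_of_eq
  rw [← h8]
  ring
end

section
/- Let Q(k₁,k₂) = k₁² − k₂² on ℝ². There is a constant C such that for all q ∈ ℝ², all integers j ≤ 0, all 0 < ε < 1/2 and all M > 1, vol{k ∈ ℝ² : |Q(k)| ≤ M^j, |k - q| ≤ M^{εj}} ≤ C · M^j · (1 + (1-2ε)|j|). -/
open MeasureTheory

section Aux
open Set Real

lemma key_int (δ s r : ℝ) (hδ : 0 < δ) (hs : 0 < s) (hr : 0 < r) (a b : ℝ)
    (ha : s ≤ a) (hb : b ≤ a + 2 * r) :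
    ∫⁻ y in Set.Icc a b, ENNReal.ofReal (4 * δ / |y|) ≤
      ENNReal.ofReal (4 * δ * Real.log ((s + 2 * r) / s)) := by
  have ha0 : 0 < a := lt_of_lt_of_le hs ha
  have hL0 : 0 ≤ Real.log ((s + 2 * r) / s) := by
    apply Real.log_nonneg
    rw [le_div_iff₀ hs]; linarith
  rcases le_or_gt b a with hba | hab
  · -- degenerate: Icc a b ⊆ {a}, measure zero
    have hsub : Set.Icc a b ⊆ {a} := by
      intro x hx; rcases le_antisymm (hx.2.trans hba) hx.1 with h; simp [h]
    calc ∫⁻ y in Set.Icc a b, ENNReal.ofReal (4 * δ / |y|)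
        ≤ ∫⁻ y in ({a} : Set ℝ), ENNReal.ofReal (4 * δ / |y|) := lintegral_mono_set hsub
      _ = 0 := by rw [Measure.restrict_eq_zero.mpr (by simp), lintegral_zero_measure]
      _ ≤ _ := zero_le
  · have hcong : ∫⁻ y in Set.Icc a b, ENNReal.ofReal (4 * δ / |y|)
        = ∫⁻ y in Set.Icc a b, ENNReal.ofReal (4 * δ / y) := by
      apply setLIntegral_congr_fun measurableSet_Icc
      intro y hy; dsimp only
      rw [abs_of_pos (lt_of_lt_of_le ha0 hy.1)]
    rw [hcong, ← setLIntegral_congr (MeasureTheory.Ioc_ae_eq_Icc (μ := volume) (a := a) (b := b))]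
    have hint : IntegrableOn (fun y => 4 * δ / y) (Set.Ioc a b) := by
      apply IntegrableOn.mono_set (t := Set.Icc a b) _ Set.Ioc_subset_Icc_self
      apply ContinuousOn.integrableOn_compact isCompact_Icc
      apply ContinuousOn.div continuousOn_const continuousOn_id
      intro y hy; exact ne_of_gt (lt_of_lt_of_le ha0 hy.1)
    rw [← ofReal_integral_eq_lintegral_ofReal hint]
    swap
    · filter_upwards [ae_restrict_mem measurableSet_Ioc] with y hy
      exact div_nonneg (by positivity) (le_of_lt (lt_of_lt_of_le ha0 hy.1.le))
    apply ENNReal.ofReal_le_ofReal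
    have heq : ∫ y in Set.Ioc a b, 4 * δ / y = 4 * δ * Real.log (b / a) := by
      rw [← intervalIntegral.integral_of_le hab.le]
      have : ∀ y : ℝ, 4 * δ / y = (4 * δ) * (1 / y) := fun y => by ring
      simp_rw [this]
      rw [intervalIntegral.integral_const_mul, integral_one_div]
      intro h
      rw [Set.uIcc_of_le hab.le] at h
      exact absurd h.1 (by linarith)
    rw [heq]
    have hlog : Real.log (b / a) ≤ Real.log ((s + 2 * r) / s) := by
      apply Real.log_le_log (div_pos (ha0.trans hab) ha0)
      rw [div_le_div_iff₀ ha0 hs]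
      nlinarith [mul_le_mul_of_nonneg_left ha (le_of_lt hr)]
    exact mul_le_mul_of_nonneg_left hlog (by positivity)

lemma key_int_neg (δ s r : ℝ) (hδ : 0 < δ) (hs : 0 < s) (hr : 0 < r) (a b : ℝ)
    (hb : b ≤ -s) (ha : b - 2 * r ≤ a) :
    ∫⁻ y in Set.Icc a b, ENNReal.ofReal (4 * δ / |y|) ≤
      ENNReal.ofReal (4 * δ * Real.log ((s + 2 * r) / s)) := by
  have hflip : ∫⁻ y in Set.Icc a b, ENNReal.ofReal (4 * δ / |y|)
      = ∫⁻ y in Set.Icc (-b) (-a), ENNReal.ofReal (4 * δ / |y|) := by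
    have h := (Measure.measurePreserving_neg (volume : Measure ℝ)).setLIntegral_comp_preimage_emb
      (MeasurableEquiv.neg ℝ).measurableEmbedding
      (fun y => ENNReal.ofReal (4 * δ / |y|)) (Set.Icc (-b) (-a))
    simp only [abs_neg] at h
    rw [← h]
    congr 1
    ext x; simp [neg_le, le_neg, and_comm]
  rw [hflip]
  exact key_int δ s r hδ hs hr (-b) (-a) (by linarith) (by linarith)


lemma section_bound (δ : ℝ) (hδ : 0 < δ) (y : ℝ) :
    volume {x : ℝ | |x ^ 2 - y ^ 2| ≤ δ} ≤
      ENNReal.ofReal (4 * (if |y| ≤ Real.sqrt δ then Real.sqrt δ else δ / |y|)) := by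
  set a := Real.sqrt (y ^ 2 - δ) with ha
  set b := Real.sqrt (y ^ 2 + δ) with hbdef
  have hab : a ≤ b := Real.sqrt_le_sqrt (by linarith)
  have hb0 : 0 ≤ b := Real.sqrt_nonneg _
  have ha0 : 0 ≤ a := Real.sqrt_nonneg _
  have hsub : {x : ℝ | |x ^ 2 - y ^ 2| ≤ δ} ⊆ Set.Icc (-b) (-a) ∪ Set.Icc a b := by
    intro x hx
    simp only [Set.mem_setOf_eq, abs_le] at hx
    have hxb : |x| ≤ b := Real.abs_le_sqrt (by linarith)
    have hxa : a ≤ |x| := by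
      rw [← Real.sqrt_sq_eq_abs]
      exact Real.sqrt_le_sqrt (by linarith)
    rcases le_or_gt 0 x with hx0 | hx0
    · right; rw [abs_of_nonneg hx0] at hxa hxb; exact ⟨hxa, hxb⟩
    · left; rw [abs_of_neg hx0] at hxa hxb; constructor <;> linarith
  calc volume {x : ℝ | |x ^ 2 - y ^ 2| ≤ δ}
      ≤ volume (Set.Icc (-b) (-a) ∪ Set.Icc a b) := measure_mono hsub
    _ ≤ volume (Set.Icc (-b) (-a)) + volume (Set.Icc a b) := measure_union_le _ _
    _ = ENNReal.ofReal (b - a) + ENNReal.ofReal (b - a) := by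
        rw [Real.volume_Icc, Real.volume_Icc]; ring_nf
    _ = ENNReal.ofReal (2 * (b - a)) := by
        rw [← ENNReal.ofReal_add (by linarith) (by linarith)]; ring_nf
    _ ≤ _ := by
        apply ENNReal.ofReal_le_ofReal
        split_ifs with h
        · -- |y| ≤ √δ : y² ≤ δ, b ≤ √(2δ) ≤ 2√δ
          have hy2 : y ^ 2 ≤ δ := by
            rw [← Real.sq_sqrt hδ.le]
            rw [← sq_abs]
            exact pow_le_pow_left₀ (abs_nonneg y) h 2
          have hb2 : b ≤ 2 * Real.sqrt δ := by
            rw [hbdef]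
            calc Real.sqrt (y ^ 2 + δ) ≤ Real.sqrt (4 * δ) := Real.sqrt_le_sqrt (by linarith)
              _ = 2 * Real.sqrt δ := by
                  rw [show (4 : ℝ) * δ = 2 ^ 2 * δ by ring, Real.sqrt_mul (by positivity),
                    Real.sqrt_sq (by norm_num)]
          linarith
        · -- |y| > √δ
          push_neg at h
          have hy0 : 0 < |y| := lt_trans (Real.sqrt_pos.mpr hδ) h
          have hy2 : δ < y ^ 2 := by
            have h2 := mul_self_lt_mul_self (Real.sqrt_nonneg δ) h
            rw [Real.mul_self_sqrt hδ.le] at h2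
            nlinarith [sq_abs y]
          have ha2 : a ^ 2 = y ^ 2 - δ := Real.sq_sqrt (by linarith)
          have hb2 : b ^ 2 = y ^ 2 + δ := Real.sq_sqrt (by linarith)
          have hby : |y| ≤ b := by
            rw [← Real.sqrt_sq_eq_abs, hbdef]
            exact Real.sqrt_le_sqrt (by linarith)
          have hprod : (b - a) * (b + a) = 2 * δ := by nlinarith
          have hba0 : 0 < b + a := by linarith [lt_of_lt_of_le hy0 hby]
          have hfrac : b - a = 2 * δ / (b + a) := by
            field_simp at hprod ⊢; linarith
          rw [hfrac]
          have hstep : 2 * δ / (b + a) ≤ 2 * δ / |y| :=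
            div_le_div_of_nonneg_left (by positivity) hy0 (by linarith)
          calc 2 * (2 * δ / (b + a)) ≤ 2 * (2 * δ / |y|) := by linarith
            _ = 4 * (δ / |y|) := by ring

lemma coord_le_dist (k q : EuclideanSpace ℝ (Fin 2)) (i : Fin 2) :
    |k i - q i| ≤ dist k q := by
  rw [EuclideanSpace.dist_eq, ← Real.sqrt_sq_eq_abs]
  apply Real.sqrt_le_sqrt
  have h : (k i - q i) ^ 2 = dist (k i) (q i) ^ 2 := by rw [Real.dist_eq, sq_abs]
  rw [h]
  exact Finset.single_le_sum (f := fun m => dist (k m) (q m) ^ 2)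
    (fun m _ => sq_nonneg _) (Finset.mem_univ i)

end Aux

section Main
open Set Real

/-- For `Q(k₁,k₂) = k₁² − k₂²` on `ℝ²` and fixed `M > 1`, there is a
constant `C` such that for all `q ∈ ℝ²`, integers `j ≤ 0` and `0 < ε < 1/2`,
`vol{k : |Q(k)| ≤ M^j, |k-q| ≤ M^{εj}} ≤ C M^j (1 + (1-2ε)|j|)`. -/
theorem stmt7 (M : ℝ) (hM : 1 < M) :
    ∃ C : ℝ, 0 < C ∧
      ∀ (q : EuclideanSpace ℝ (Fin 2)) (j : ℤ), j ≤ 0 →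
        ∀ ε : ℝ, 0 < ε → ε < 1 / 2 →
          volume {k : EuclideanSpace ℝ (Fin 2) |
              |(k 0) ^ 2 - (k 1) ^ 2| ≤ M ^ j ∧ dist k q ≤ M ^ (ε * (j : ℝ))} ≤
            ENNReal.ofReal (C * M ^ j * (1 + (1 - 2 * ε) * |(j : ℝ)|)) := by
  have hM0 : (0 : ℝ) < M := by linarith
  have hK : 0 < Real.log M := Real.log_pos hM
  have hA : 0 < Real.log 3 := Real.log_pos (by norm_num)
  refine ⟨8 * (1 + Real.log 3 + Real.log M), by positivity, ?_⟩
  intro q j hj ε hε hε2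
  set δ : ℝ := M ^ j with hδdef
  set r : ℝ := M ^ (ε * (j : ℝ)) with hrdef
  have hδ : 0 < δ := zpow_pos hM0 j
  have hr : 0 < r := Real.rpow_pos_of_pos hM0 _
  set s : ℝ := Real.sqrt δ with hsdef
  have hs : 0 < s := Real.sqrt_pos.mpr hδ
  set c : ℝ := q 1 with hcdef
  have hjr : (j : ℝ) ≤ 0 := by exact_mod_cast hj
  -- s = M ^ (j/2) as rpow
  have hδrpow : δ = M ^ ((j : ℝ)) := by rw [hδdef, Real.rpow_intCast]
  have hsrpow : s = M ^ ((j : ℝ) / 2) := by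
    rw [hsdef, hδrpow, Real.sqrt_eq_rpow, ← Real.rpow_mul hM0.le, mul_one_div]
  have hsr : s ≤ r := by
    rw [hsrpow, hrdef]
    apply Real.rpow_le_rpow_left_iff hM |>.mpr
    nlinarith
  -- the product set
  set T : Set (ℝ × ℝ) := {p | |p.1 ^ 2 - p.2 ^ 2| ≤ δ ∧ |p.2 - c| ≤ r} with hTdef
  have hT : MeasurableSet T := by
    rw [hTdef]
    apply MeasurableSet.inter
    · exact measurableSet_le ((measurable_fst.pow_const 2).sub
        (measurable_snd.pow_const 2)).abs measurable_const
    · exact measurableSet_le (measurable_snd.sub_const c).abs measurable_const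
  -- transfer from EuclideanSpace to ℝ × ℝ
  have φMP := (volume_preserving_finTwoArrow ℝ).comp
    (EuclideanSpace.volume_preserving_symm_measurableEquiv_toLp (Fin 2))
  have hsub : {k : EuclideanSpace ℝ (Fin 2) |
      |(k 0) ^ 2 - (k 1) ^ 2| ≤ M ^ j ∧ dist k q ≤ M ^ (ε * (j : ℝ))} ⊆
      (⇑(MeasurableEquiv.finTwoArrow) ∘ ⇑(MeasurableEquiv.toLp 2 (Fin 2 → ℝ)).symm) ⁻¹' T := by
    intro k hk
    exact ⟨hk.1, le_trans (coord_le_dist k q 1) hk.2⟩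
  have hle1 : volume {k : EuclideanSpace ℝ (Fin 2) |
      |(k 0) ^ 2 - (k 1) ^ 2| ≤ M ^ j ∧ dist k q ≤ M ^ (ε * (j : ℝ))} ≤ volume T := by
    calc volume _ ≤ volume ((⇑(MeasurableEquiv.finTwoArrow) ∘
          ⇑(MeasurableEquiv.toLp 2 (Fin 2 → ℝ)).symm) ⁻¹' T) := measure_mono hsub
      _ = volume T := φMP.measure_preimage hT.nullMeasurableSet
  -- slice
  have hslice : volume T = ∫⁻ y, volume ((fun x => (x, y)) ⁻¹' T) := by
    rw [Measure.volume_eq_prod, Measure.prod_apply_symm hT]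
  -- pointwise bound
  set g1 : ℝ → ENNReal := (Set.Icc (-s) s).indicator (fun _ => ENNReal.ofReal (4 * s)) with hg1
  set g2 : ℝ → ENNReal := (Set.Icc (max s (c - r)) (c + r)).indicator
    (fun y => ENNReal.ofReal (4 * δ / |y|)) with hg2
  set g3 : ℝ → ENNReal := (Set.Icc (c - r) (min (-s) (c + r))).indicator
    (fun y => ENNReal.ofReal (4 * δ / |y|)) with hg3
  have hpt : ∀ y : ℝ, volume ((fun x => (x, y)) ⁻¹' T) ≤ g1 y + g2 y + g3 y := by
    intro y
    rcases le_or_gt (|y - c|) r with hyc | hyc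
    · have hsec : ((fun x => (x, y)) ⁻¹' T) ⊆ {x : ℝ | |x ^ 2 - y ^ 2| ≤ δ} :=
        fun x hx => hx.1
      have hb := le_trans (measure_mono hsec) (section_bound δ hδ y)
      have hyc' := abs_le.mp hyc
      rcases le_or_gt (|y|) s with hys | hys
      · rw [if_pos hys] at hb
        have h1 : g1 y = ENNReal.ofReal (4 * s) := by
          rw [hg1, Set.indicator_of_mem]
          exact abs_le.mp hys
        calc volume ((fun x => (x, y)) ⁻¹' T) ≤ g1 y := by rw [h1]; exact hb
          _ ≤ g1 y + g2 y + g3 y := by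
              exact le_add_right (le_add_right le_rfl)
      · rw [if_neg (not_le.mpr hys)] at hb
        rcases le_or_gt 0 y with hy0 | hy0
        · have hyy : y ∈ Set.Icc (max s (c - r)) (c + r) := by
            constructor
            · apply max_le
              · rw [abs_of_nonneg hy0] at hys; linarith
              · linarith [hyc'.1]
            · linarith [hyc'.2]
          have h2 : g2 y = ENNReal.ofReal (4 * δ / |y|) := by
            rw [hg2, Set.indicator_of_mem hyy]
          calc volume ((fun x => (x, y)) ⁻¹' T) ≤ g2 y := by
                rw [h2, mul_div_assoc]; exact hb
            _ ≤ g1 y + g2 y + g3 y := by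
                exact le_add_right (le_add_left le_rfl)
        · have hyy : y ∈ Set.Icc (c - r) (min (-s) (c + r)) := by
            constructor
            · linarith [hyc'.1]
            · apply le_min
              · rw [abs_of_neg hy0] at hys; linarith
              · linarith [hyc'.2]
          have h3 : g3 y = ENNReal.ofReal (4 * δ / |y|) := by
            rw [hg3, Set.indicator_of_mem hyy]
          calc volume ((fun x => (x, y)) ⁻¹' T) ≤ g3 y := by
                rw [h3, mul_div_assoc]; exact hb
            _ ≤ g1 y + g2 y + g3 y := le_add_left le_rfl
    · have hemp : ((fun x => (x, y)) ⁻¹' T) = ∅ := by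
        ext x
        simp only [Set.mem_preimage, hTdef, Set.mem_setOf_eq, Set.mem_empty_iff_false,
          iff_false, not_and]
        intro _
        exact not_le.mpr hyc
      simp [hemp]
  -- integrate
  have hmeas_f : Measurable fun y : ℝ => ENNReal.ofReal (4 * δ / |y|) := by
    apply Measurable.ennreal_ofReal
    exact measurable_const.div measurable_abs
  have hmg1 : Measurable g1 := by
    rw [hg1]; exact measurable_const.indicator measurableSet_Icc
  have hmg2 : Measurable g2 := by rw [hg2]; exact hmeas_f.indicator measurableSet_Icc
  have hmg3 : Measurable g3 := by rw [hg3]; exact hmeas_f.indicator measurableSet_Icc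
  have hint1 : ∫⁻ y, g1 y = ENNReal.ofReal (8 * δ) := by
    rw [hg1, lintegral_indicator measurableSet_Icc, setLIntegral_const, Real.volume_Icc,
      ← ENNReal.ofReal_mul (by positivity)]
    congr 1
    have : s * s = δ := Real.mul_self_sqrt hδ.le
    nlinarith
  set L : ℝ := Real.log ((s + 2 * r) / s) with hLdef
  have hL0 : 0 ≤ L := by
    apply Real.log_nonneg
    rw [le_div_iff₀ hs]; linarith
  have hint2 : ∫⁻ y, g2 y ≤ ENNReal.ofReal (4 * δ * L) := by
    rw [hg2, lintegral_indicator measurableSet_Icc]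
    exact key_int δ s r hδ hs hr _ _ (le_max_left _ _) (by linarith [le_max_right s (c - r)])
  have hint3 : ∫⁻ y, g3 y ≤ ENNReal.ofReal (4 * δ * L) := by
    rw [hg3, lintegral_indicator measurableSet_Icc]
    exact key_int_neg δ s r hδ hs hr _ _ (min_le_left _ _) (by linarith [min_le_right (-s) (c + r)])
  have htot : volume T ≤ ENNReal.ofReal (8 * δ + 4 * δ * L + 4 * δ * L) := by
    rw [hslice]
    calc ∫⁻ y, volume ((fun x => (x, y)) ⁻¹' T) ≤ ∫⁻ y, (g1 y + g2 y + g3 y) :=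
          lintegral_mono hpt
      _ = (∫⁻ y, g1 y) + (∫⁻ y, g2 y) + (∫⁻ y, g3 y) := by
          rw [lintegral_add_right _ hmg3, lintegral_add_right _ hmg2]
      _ ≤ ENNReal.ofReal (8 * δ) + ENNReal.ofReal (4 * δ * L) + ENNReal.ofReal (4 * δ * L) := by
          exact add_le_add (add_le_add hint1.le hint2) hint3
      _ = ENNReal.ofReal (8 * δ + 4 * δ * L + 4 * δ * L) := by
          rw [← ENNReal.ofReal_add (by positivity) (by positivity),
            ← ENNReal.ofReal_add (by positivity) (by positivity)]
  -- final real estimate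
  have hLle : L ≤ Real.log 3 + (1 / 2) * ((1 - 2 * ε) * |(j : ℝ)|) * Real.log M := by
    have h1 : L ≤ Real.log (3 * (r / s)) := by
      apply Real.log_le_log (by positivity)
      rw [div_le_iff₀ hs]
      have : 3 * (r / s) * s = 3 * r := by field_simp
      rw [this]; linarith
    have h2 : Real.log (3 * (r / s)) = Real.log 3 + Real.log r - Real.log s := by
      rw [Real.log_mul (by norm_num) (by positivity), Real.log_div (by positivity) (by positivity)]
      ring
    have h3 : Real.log r = ε * (j : ℝ) * Real.log M := by
      rw [hrdef, Real.log_rpow hM0]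
    have h4 : Real.log s = ((j : ℝ) / 2) * Real.log M := by
      rw [hsrpow, Real.log_rpow hM0]
    have h5 : |(j : ℝ)| = -(j : ℝ) := abs_of_nonpos hjr
    rw [h2, h3, h4] at h1
    rw [h5]
    have h6 : (1 / 2 : ℝ) * ((1 - 2 * ε) * -(j : ℝ)) * Real.log M
        = ε * (j : ℝ) * Real.log M - (j : ℝ) / 2 * Real.log M := by ring
    rw [h6]
    linarith
  have hX : 0 ≤ (1 - 2 * ε) * |(j : ℝ)| := by
    apply mul_nonneg (by linarith) (abs_nonneg _)
  have hreal : 8 * δ + 4 * δ * L + 4 * δ * L ≤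
      8 * (1 + Real.log 3 + Real.log M) * δ * (1 + (1 - 2 * ε) * |(j : ℝ)|) := by
    set X := (1 - 2 * ε) * |(j : ℝ)|
    have h6 : L ≤ Real.log 3 + (1 / 2) * X * Real.log M := hLle
    nlinarith [mul_nonneg hδ.le hX, mul_nonneg (mul_nonneg hδ.le hX) hK.le,
      mul_nonneg hδ.le hL0, mul_nonneg hδ.le hA.le, mul_nonneg hδ.le hK.le,
      mul_nonneg (mul_nonneg hδ.le hX) hA.le]
  calc volume {k : EuclideanSpace ℝ (Fin 2) |
        |(k 0) ^ 2 - (k 1) ^ 2| ≤ M ^ j ∧ dist k q ≤ M ^ (ε * (j : ℝ))}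
      ≤ volume T := hle1
    _ ≤ ENNReal.ofReal (8 * δ + 4 * δ * L + 4 * δ * L) := htot
    _ ≤ _ := ENNReal.ofReal_le_ofReal (by rw [hδdef] at hreal ⊢; linarith)

end Main
end

section
/- Let a, b be nonzero unit vectors in ℝ^d, let P : ℝ^d → ℝ^m be the orthogonal projection onto the first m coordinates, and suppose Pa ≠ 0 and Pb ≠ 0. If |a − b| ≤ 2β and |Pb| ≥ c > 0, then sin θ(Pa, Pb) ≤ 2β/c, where θ(u,v) denotes the angle between vectors u and v. -/
open InnerProductGeometry
open scoped RealInnerProductSpace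

lemma proj_norm_le (d m : ℕ) (hmd : m < d) (x : EuclideanSpace ℝ (Fin d))
    (y : EuclideanSpace ℝ (Fin m)) (h : ∀ i : Fin m, y i = x (Fin.castLE hmd.le i)) :
    ‖y‖ ≤ ‖x‖ := by
  rw [EuclideanSpace.norm_eq, EuclideanSpace.norm_eq]
  apply Real.sqrt_le_sqrt
  calc ∑ i : Fin m, ‖y i‖ ^ 2 = ∑ i : Fin m, ‖x (Fin.castLE hmd.le i)‖ ^ 2 := by
        simp [h]
    _ = ∑ j ∈ Finset.univ.map (Fin.castLEEmb hmd.le), ‖x j‖ ^ 2 := by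
        rw [Finset.sum_map]; rfl
    _ ≤ ∑ j : Fin d, ‖x j‖ ^ 2 := by
        apply Finset.sum_le_sum_of_subset_of_nonneg (Finset.subset_univ _)
        intro i _ _; positivity

lemma sin_angle_le (V : Type*) [NormedAddCommGroup V] [InnerProductSpace ℝ V]
    (u v : V) (hu : u ≠ 0) (hv : v ≠ 0) :
    Real.sin (angle u v) ≤ ‖u - v‖ / ‖v‖ := by
  have hun : (0:ℝ) < ‖u‖ := norm_pos_iff.2 hu
  have hvn : (0:ℝ) < ‖v‖ := norm_pos_iff.2 hv
  have key := sin_angle_mul_norm_mul_norm u v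
  have hsub : ‖u - v‖ ^ 2 = ⟪u, u⟫ - 2 * ⟪u, v⟫ + ⟪v, v⟫ := by
    rw [@norm_sub_sq_real, real_inner_self_eq_norm_sq, real_inner_self_eq_norm_sq]
  have hle : ⟪u, u⟫ * ⟪v, v⟫ - ⟪u, v⟫ * ⟪u, v⟫ ≤ (‖u - v‖ * ‖u‖) ^ 2 := by
    have huu : ⟪u, u⟫ = ‖u‖ ^ 2 := real_inner_self_eq_norm_sq u
    have hvv : ⟪v, v⟫ = ‖v‖ ^ 2 := real_inner_self_eq_norm_sq v
    nlinarith [sq_nonneg (⟪u, u⟫ - ⟪u, v⟫), mul_pow ‖u - v‖ ‖u‖ 2, sq_nonneg ‖u‖]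
  have hsqrt : Real.sqrt (⟪u, u⟫ * ⟪v, v⟫ - ⟪u, v⟫ * ⟪u, v⟫) ≤ ‖u - v‖ * ‖u‖ := by
    calc Real.sqrt _ ≤ Real.sqrt ((‖u - v‖ * ‖u‖) ^ 2) := Real.sqrt_le_sqrt hle
      _ = ‖u - v‖ * ‖u‖ := Real.sqrt_sq (by positivity)
  have : Real.sin (angle u v) * (‖u‖ * ‖v‖) ≤ ‖u - v‖ * ‖u‖ := key ▸ hsqrt
  rw [le_div_iff₀ hvn]
  nlinarith [this, hun, hvn]

/-- Let `a, b` be unit vectors in `ℝ^d`, `P` the orthogonal projection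
onto the first `m` coordinates, with `Pa ≠ 0`, `Pb ≠ 0`.  If `|a - b| ≤ 2β` and
`|Pb| ≥ c > 0`, then `sin θ(Pa, Pb) ≤ 2β/c`. -/
theorem stmt10 (d m : ℕ) (hm : 1 ≤ m) (hmd : m < d)
    (a b : EuclideanSpace ℝ (Fin d)) (ha : ‖a‖ = 1) (hb : ‖b‖ = 1)
    (P : EuclideanSpace ℝ (Fin d) → EuclideanSpace ℝ (Fin m))
    (hP : ∀ (v : EuclideanSpace ℝ (Fin d)) (i : Fin m), P v i = v (Fin.castLE hmd.le i))
    (hPa : P a ≠ 0) (hPb : P b ≠ 0)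
    (c β : ℝ) (hc : 0 < c) (hβ : 0 < β)
    (hdist : ‖a - b‖ ≤ 2 * β) (hPbc : c ≤ ‖P b‖) :
    Real.sin (InnerProductGeometry.angle (P a) (P b)) ≤ 2 * β / c := by
  have hproj : ‖P a - P b‖ ≤ ‖a - b‖ := by
    apply proj_norm_le d m hmd
    intro i
    simp only [PiLp.sub_apply, hP]
  have h1 := sin_angle_le _ (P a) (P b) hPa hPb
  have h2 : ‖P a - P b‖ / ‖P b‖ ≤ 2 * β / c := by
    apply div_le_div₀ (by positivity) (hproj.trans hdist) hc hPbc
  linarith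
end

section
/- Let d ≥ 3, 1 ≤ m ≤ d−1, and let F be the truncated cone {(rθ₁, rθ₂) : 0 ≤ r ≤ 1, θ₁ ∈ S^{m-1}, θ₂ ∈ S^{d-m-1}} ⊆ ℝ^d, i.e. the zero set of Q(k) = k₁²+⋯+k_m² − k_{m+1}²−⋯−k_d² intersected with the ball of radius √2. Fix ω = (rθ₁, rθ₂) ∈ F with r > 0, and let D(ω) = {(tθ₁, tθ₂) : 0 < |t| ≤ 1}. Then there is a constant c (depending only on d, m) such that for all β > 0, the (d−1)-dimensional Hausdorff measure of U_β(D(ω)) ∩ F is at most c·β^{d−2}, where U_β(A) is the open β-neighbourhood of A. -/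
open MeasureTheory Metric Finset
open scoped ENNReal NNReal

namespace Stmt13Aux

variable {n : ℕ}

local notation "P " n => EuclideanSpace ℝ (Fin n)

lemma norm_sq_eq {N : ℕ} (u : EuclideanSpace ℝ (Fin N)) : ‖u‖ ^ 2 = ∑ i, (u i) ^ 2 := by
  rw [EuclideanSpace.norm_eq, Real.sq_sqrt (by positivity)]
  simp [sq_abs]

/-- The quantity `T` : sum of `±(q i)^2` with sign `+` on indices mapping (via `succAbove j`)
to the second block. -/
noncomputable def Tq (m : ℕ) (j : Fin (n + 1)) (q : EuclideanSpace ℝ (Fin n)) : ℝ :=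
  ∑ i : Fin n, (if ((j.succAbove i : ℕ) < m) then (-1 : ℝ) else 1) * (q i) ^ 2

/-- Graph map for the cone. -/
noncomputable def Gmap (m : ℕ) (j : Fin (n + 1)) (σ : ℝ) (q : EuclideanSpace ℝ (Fin n)) :
    EuclideanSpace ℝ (Fin (n + 1)) :=
  WithLp.toLp 2 (j.insertNth (σ * Real.sqrt (Tq m j q)) (WithLp.ofLp q))

/-- `removeNth` packaged as a map into Euclidean space (to get the right norm). -/
def rmv (j : Fin (n + 1)) (x : EuclideanSpace ℝ (Fin (n + 1))) :
    EuclideanSpace ℝ (Fin n) :=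
  WithLp.toLp 2 (j.removeNth x)

/-- Good parameter domain. -/
def Om (m : ℕ) (j : Fin (n + 1)) : Set (EuclideanSpace ℝ (Fin n)) :=
  {q | ‖q‖ ^ 2 ≤ 2 * m * Tq m j q}

lemma Tq_nonneg_of_mem {m : ℕ} (hm : 1 ≤ m) {j : Fin (n + 1)}
    {q : EuclideanSpace ℝ (Fin n)} (hq : q ∈ Om m j) : 0 ≤ Tq m j q := by
  have h1 : (0:ℝ) ≤ ‖q‖ ^ 2 := by positivity
  have hm' : (1:ℝ) ≤ (m:ℝ) := by exact_mod_cast hm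
  have hq' : ‖q‖ ^ 2 ≤ 2 * m * Tq m j q := hq
  nlinarith [hq', h1, hm']

lemma abs_Tq_sub_le (m : ℕ) (j : Fin (n + 1)) (q q' : EuclideanSpace ℝ (Fin n)) :
    |Tq m j q - Tq m j q'| ≤ ‖q - q'‖ * ‖q + q'‖ := by
  have h1 : Tq m j q - Tq m j q'
      = ∑ i : Fin n, (if ((j.succAbove i : ℕ) < m) then (-1 : ℝ) else 1)
        * ((q i - q' i) * (q i + q' i)) := by
    rw [Tq, Tq, ← Finset.sum_sub_distrib]
    congr 1; funext i; split <;> ring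
  rw [h1]
  calc |∑ i : Fin n, (if ((j.succAbove i : ℕ) < m) then (-1 : ℝ) else 1)
        * ((q i - q' i) * (q i + q' i))|
      ≤ ∑ i : Fin n, |(if ((j.succAbove i : ℕ) < m) then (-1 : ℝ) else 1)
        * ((q i - q' i) * (q i + q' i))| := Finset.abs_sum_le_sum_abs _ _
    _ ≤ ∑ i : Fin n, |q i - q' i| * |q i + q' i| := by
        apply Finset.sum_le_sum
        intro i _
        rw [abs_mul, abs_mul]
        have : |(if ((j.succAbove i : ℕ) < m) then (-1 : ℝ) else 1)| = 1 := by
          split <;> simp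
        rw [this, one_mul]
    _ ≤ Real.sqrt (∑ i : Fin n, |q i - q' i| ^ 2)
        * Real.sqrt (∑ i : Fin n, |q i + q' i| ^ 2) :=
        Real.sum_mul_le_sqrt_mul_sqrt _ _ _
    _ = ‖q - q'‖ * ‖q + q'‖ := by
        have key : ∀ u : EuclideanSpace ℝ (Fin n),
            Real.sqrt (∑ i : Fin n, |u i| ^ 2) = ‖u‖ := by
          intro u
          have : (∑ i : Fin n, |u i| ^ 2) = ∑ i : Fin n, (u i) ^ 2 := by
            apply Finset.sum_congr rfl; intro i _; exact sq_abs _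
          rw [this, ← norm_sq_eq, Real.sqrt_sq (norm_nonneg _)]
        have e1 : Real.sqrt (∑ i : Fin n, |q i - q' i| ^ 2) = ‖q - q'‖ := by
          have := key (q - q')
          simpa using this
        have e2 : Real.sqrt (∑ i : Fin n, |q i + q' i| ^ 2) = ‖q + q'‖ := by
          have := key (q + q')
          simpa using this
        rw [e1, e2]


lemma abs_sqrtT_sub_le_aux {m : ℕ} (hm : 1 ≤ m) (j : Fin (n + 1))
    {q q' : EuclideanSpace ℝ (Fin n)} (hq : q ∈ Om m j) (hq' : q' ∈ Om m j)
    (hle : ‖q'‖ ≤ ‖q‖) :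
    |Real.sqrt (Tq m j q) - Real.sqrt (Tq m j q')| ≤ (2 * (m + 1)) * ‖q - q'‖ := by
  set a := Tq m j q with ha
  set b := Tq m j q' with hb
  have han : 0 ≤ a := Tq_nonneg_of_mem hm hq
  have hbn : 0 ≤ b := Tq_nonneg_of_mem hm hq'
  rcases eq_or_lt_of_le (norm_nonneg q) with h0 | h0
  · -- ‖q‖ = 0, hence q = q' = 0
    have hq0 : q = 0 := by rwa [eq_comm, norm_eq_zero] at h0
    have hq'0 : q' = 0 := by
      have : ‖q'‖ ≤ 0 := by rw [← h0] at hle; exact hle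
      exact norm_le_zero_iff.mp this
    subst hq0; subst hq'0
    simp [ha, hb]
  · -- main case
    have hq2 : ‖q‖ ^ 2 ≤ 2 * m * a := hq
    have hm' : (1:ℝ) ≤ (m:ℝ) := by exact_mod_cast hm
    have hmpos : (0:ℝ) < 2 * m := by linarith
    have hsa : Real.sqrt a * Real.sqrt a = a := Real.mul_self_sqrt han
    have hsb : Real.sqrt b * Real.sqrt b = b := Real.mul_self_sqrt hbn
    have hprod : (Real.sqrt a - Real.sqrt b) * (Real.sqrt a + Real.sqrt b) = a - b := by
      nlinarith [hsa, hsb]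
    have hposab : (0:ℝ) ≤ Real.sqrt a + Real.sqrt b := by positivity
    have habs : |Real.sqrt a - Real.sqrt b| * (Real.sqrt a + Real.sqrt b) = |a - b| := by
      rw [← hprod, abs_mul, abs_of_nonneg hposab]
    have hT : |a - b| ≤ ‖q - q'‖ * ‖q + q'‖ := abs_Tq_sub_le m j q q'
    have hplus : ‖q + q'‖ ≤ 2 * ‖q‖ := by
      calc ‖q + q'‖ ≤ ‖q‖ + ‖q'‖ := norm_add_le _ _
        _ ≤ 2 * ‖q‖ := by linarith
    have hT2 : |a - b| ≤ ‖q - q'‖ * (2 * ‖q‖) :=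
      hT.trans (by
        have := mul_le_mul_of_nonneg_left hplus (norm_nonneg (q - q'))
        linarith)
    -- ‖q‖ ≤ √(2m) * √a
    have hq3 : ‖q‖ ≤ Real.sqrt (2 * m) * Real.sqrt a := by
      rw [← Real.sqrt_mul hmpos.le]
      rw [show ‖q‖ = Real.sqrt (‖q‖ ^ 2) from (Real.sqrt_sq (norm_nonneg q)).symm]
      exact Real.sqrt_le_sqrt hq2
    have hsm : Real.sqrt (2 * m) ≤ (m:ℝ) + 1 := by
      rw [show ((m:ℝ) + 1) = Real.sqrt (((m:ℝ) + 1) ^ 2) from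
        (Real.sqrt_sq (by positivity)).symm]
      apply Real.sqrt_le_sqrt
      nlinarith
    -- conclude
    have hsum : Real.sqrt a + Real.sqrt b ≥ Real.sqrt a := by
      have := Real.sqrt_nonneg b; linarith
    have hfin : |Real.sqrt a - Real.sqrt b| * ‖q‖
        ≤ (2 * ((m:ℝ) + 1)) * ‖q - q'‖ * ‖q‖ := by
      calc |Real.sqrt a - Real.sqrt b| * ‖q‖
          ≤ |Real.sqrt a - Real.sqrt b| * (Real.sqrt (2 * m) * Real.sqrt a) := by
            apply mul_le_mul_of_nonneg_left hq3 (abs_nonneg _)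
        _ ≤ Real.sqrt (2 * m) * (|Real.sqrt a - Real.sqrt b| * (Real.sqrt a + Real.sqrt b)) := by
            have h1 : |Real.sqrt a - Real.sqrt b| * Real.sqrt a
                ≤ |Real.sqrt a - Real.sqrt b| * (Real.sqrt a + Real.sqrt b) :=
              mul_le_mul_of_nonneg_left hsum (abs_nonneg _)
            have h2 := mul_le_mul_of_nonneg_left h1 (Real.sqrt_nonneg (2 * (m:ℝ)))
            nlinarith [h2]
        _ = Real.sqrt (2 * m) * |a - b| := by rw [habs]
        _ ≤ Real.sqrt (2 * m) * (‖q - q'‖ * (2 * ‖q‖)) :=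
            mul_le_mul_of_nonneg_left hT2 (Real.sqrt_nonneg _)
        _ ≤ ((m:ℝ) + 1) * (‖q - q'‖ * (2 * ‖q‖)) := by
            apply mul_le_mul_of_nonneg_right hsm (by positivity)
        _ = (2 * ((m:ℝ) + 1)) * ‖q - q'‖ * ‖q‖ := by ring
    have := (mul_le_mul_iff_of_pos_right h0).mp hfin
    exact_mod_cast this

lemma abs_sqrtT_sub_le {m : ℕ} (hm : 1 ≤ m) (j : Fin (n + 1))
    {q q' : EuclideanSpace ℝ (Fin n)} (hq : q ∈ Om m j) (hq' : q' ∈ Om m j) :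
    |Real.sqrt (Tq m j q) - Real.sqrt (Tq m j q')| ≤ (2 * (m + 1)) * ‖q - q'‖ := by
  rcases le_total ‖q'‖ ‖q‖ with h | h
  · exact abs_sqrtT_sub_le_aux hm j hq hq' h
  · rw [abs_sub_comm, ← norm_neg (q - q'), neg_sub]
    exact abs_sqrtT_sub_le_aux hm j hq' hq h

lemma lipschitz_Gmap {m : ℕ} (hm : 1 ≤ m) (j : Fin (n + 1)) {σ : ℝ} (hσ : σ ^ 2 = 1) :
    LipschitzOnWith ((3 * (m + 1) : ℕ) : NNReal) (Gmap m j σ) (Om m j) := by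
  apply LipschitzOnWith.of_dist_le_mul
  intro q hq q' hq'
  rw [dist_eq_norm, dist_eq_norm]
  have hK : (((3 * (m + 1) : ℕ) : NNReal) : ℝ) = 3 * ((m:ℝ) + 1) := by push_cast; ring
  rw [hK]
  have hKn : (0:ℝ) ≤ 3 * ((m:ℝ) + 1) := by positivity
  -- compare squares
  have hsq : ‖Gmap m j σ q - Gmap m j σ q'‖ ^ 2
      ≤ (3 * ((m:ℝ) + 1) * ‖q - q'‖) ^ 2 := by
    have e1 : ‖Gmap m j σ q - Gmap m j σ q'‖ ^ 2
        = (σ * Real.sqrt (Tq m j q) - σ * Real.sqrt (Tq m j q')) ^ 2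
          + ∑ i : Fin n, (q i - q' i) ^ 2 := by
      rw [norm_sq_eq]
      rw [Fin.sum_univ_succAbove (fun i => ((Gmap m j σ q - Gmap m j σ q') i) ^ 2) j]
      congr 1
      · congr 1
        show (Gmap m j σ q) j - (Gmap m j σ q') j = _
        simp only [Gmap, WithLp.ofLp_toLp, Fin.insertNth_apply_same]
      · apply Finset.sum_congr rfl
        intro i _
        congr 1
        show (Gmap m j σ q) (j.succAbove i) - (Gmap m j σ q') (j.succAbove i) = _
        simp only [Gmap, WithLp.ofLp_toLp, Fin.insertNth_apply_succAbove]
    have e2 : (∑ i : Fin n, (q i - q' i) ^ 2) = ‖q - q'‖ ^ 2 := by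
      rw [norm_sq_eq]
      apply Finset.sum_congr rfl
      intro i _
      rfl
    rw [e1, e2]
    have h1 : (σ * Real.sqrt (Tq m j q) - σ * Real.sqrt (Tq m j q')) ^ 2
        = (Real.sqrt (Tq m j q) - Real.sqrt (Tq m j q')) ^ 2 := by
      have : σ * Real.sqrt (Tq m j q) - σ * Real.sqrt (Tq m j q')
          = σ * (Real.sqrt (Tq m j q) - Real.sqrt (Tq m j q')) := by ring
      rw [this, mul_pow, hσ, one_mul]
    rw [h1]
    have h2 := abs_sqrtT_sub_le hm j hq hq'
    have h3 : (Real.sqrt (Tq m j q) - Real.sqrt (Tq m j q')) ^ 2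
        ≤ ((2 * ((m:ℝ) + 1)) * ‖q - q'‖) ^ 2 := by
      rw [← sq_abs]
      apply pow_le_pow_left₀ (abs_nonneg _)
      exact_mod_cast h2
    have h4 : (0:ℝ) ≤ ‖q - q'‖ := norm_nonneg _
    have hm' : (1:ℝ) ≤ (m:ℝ) := by exact_mod_cast hm
    have h6 : (1:ℝ) ≤ ((m:ℝ) + 1) ^ 2 := by nlinarith
    nlinarith [h3, sq_nonneg (‖q - q'‖), h6]
  have h5 : (0:ℝ) ≤ 3 * ((m:ℝ) + 1) * ‖q - q'‖ := by positivity
  calc ‖Gmap m j σ q - Gmap m j σ q'‖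
      = Real.sqrt (‖Gmap m j σ q - Gmap m j σ q'‖ ^ 2) :=
        (Real.sqrt_sq (norm_nonneg _)).symm
    _ ≤ Real.sqrt ((3 * ((m:ℝ) + 1) * ‖q - q'‖) ^ 2) := Real.sqrt_le_sqrt hsq
    _ = 3 * ((m:ℝ) + 1) * ‖q - q'‖ := Real.sqrt_sq h5


lemma removeNth_norm_le (j : Fin (n + 1)) (x : EuclideanSpace ℝ (Fin (n + 1))) :
    ‖rmv j x‖ ≤ ‖x‖ := by
  have hL : ‖rmv j x‖ ^ 2
      = ∑ i : Fin n, (x (j.succAbove i)) ^ 2 := norm_sq_eq _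
  have hR : ‖x‖ ^ 2 = ∑ i : Fin (n + 1), (x i) ^ 2 := norm_sq_eq x
  have hsp := Fin.sum_univ_succAbove (fun i => (x i) ^ 2) j
  have hsq : ‖rmv j x‖ ^ 2 ≤ ‖x‖ ^ 2 := by
    rw [hL, hR, hsp]
    nlinarith [sq_nonneg (x j)]
  calc ‖rmv j x‖
      = Real.sqrt (‖rmv j x‖ ^ 2) :=
        (Real.sqrt_sq (norm_nonneg _)).symm
    _ ≤ Real.sqrt (‖x‖ ^ 2) := Real.sqrt_le_sqrt hsq
    _ = ‖x‖ := Real.sqrt_sq (norm_nonneg _)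

lemma removeNth_dist_le (j : Fin (n + 1)) (x y : EuclideanSpace ℝ (Fin (n + 1))) :
    dist (rmv j x) (rmv j y) ≤ dist x y := by
  rw [dist_eq_norm, dist_eq_norm]
  have : rmv j x - rmv j y
      = rmv j (x - y) := rfl
  rw [this]
  exact removeNth_norm_le j (x - y)

lemma card_filter_lt (m : ℕ) (hmn : m ≤ n + 1) :
    (Finset.univ.filter (fun i : Fin (n + 1) => (i : ℕ) < m)).card = m := by
  have h : (Finset.univ.filter (fun i : Fin (n + 1) => (i : ℕ) < m))
      = Finset.map (Fin.castLEEmb hmn) Finset.univ := by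
    ext i
    rw [Finset.mem_filter, Finset.mem_map]
    constructor
    · rintro ⟨-, h⟩
      exact ⟨⟨(i : ℕ), h⟩, Finset.mem_univ _, Fin.ext (by simp)⟩
    · rintro ⟨x, -, rfl⟩
      exact ⟨Finset.mem_univ _, by simpa using x.isLt⟩
  rw [h, Finset.card_map, Finset.card_univ, Fintype.card_fin]

lemma cover {m : ℕ} (hm : 1 ≤ m) (hmn : m ≤ n) (k : EuclideanSpace ℝ (Fin (n + 1)))
    (hk : (∑ i : Fin (n + 1), if (i : ℕ) < m then (k i) ^ 2 else -((k i) ^ 2)) = 0) :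
    ∃ (j : Fin (n + 1)) (σ : ℝ), σ ^ 2 = 1 ∧
      rmv j k ∈ Om m j ∧
      Gmap m j σ (rmv j k) = k := by
  classical
  set S := Finset.univ.filter (fun i : Fin (n + 1) => (i : ℕ) < m) with hSdef
  have hS : S.Nonempty := by
    refine ⟨⟨0, by omega⟩, ?_⟩
    simp only [hSdef, Finset.mem_filter, Finset.mem_univ, true_and]
    exact hm
  obtain ⟨j, hjS, hjmax⟩ := Finset.exists_max_image S (fun i => (k i) ^ 2) hS
  have hjm : (j : ℕ) < m := (Finset.mem_filter.mp hjS).2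
  -- the two block sums are equal
  have hsplit : ∑ i ∈ S, (k i) ^ 2 = ∑ i ∈ Finset.univ.filter
      (fun i : Fin (n + 1) => ¬ ((i : ℕ) < m)), (k i) ^ 2 := by
    have h1 := Finset.sum_filter_add_sum_filter_not Finset.univ
      (fun i : Fin (n + 1) => (i : ℕ) < m)
      (fun i => if (i : ℕ) < m then (k i) ^ 2 else -((k i) ^ 2))
    rw [hk] at h1
    have h2 : ∑ i ∈ S, (if (i : ℕ) < m then (k i) ^ 2 else -((k i) ^ 2))
        = ∑ i ∈ S, (k i) ^ 2 := by
      apply Finset.sum_congr rfl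
      intro i hi
      rw [if_pos (Finset.mem_filter.mp hi).2]
    have h3 : ∑ i ∈ Finset.univ.filter (fun i : Fin (n + 1) => ¬ ((i : ℕ) < m)),
        (if (i : ℕ) < m then (k i) ^ 2 else -((k i) ^ 2))
        = ∑ i ∈ Finset.univ.filter (fun i : Fin (n + 1) => ¬ ((i : ℕ) < m)),
          -((k i) ^ 2) := by
      apply Finset.sum_congr rfl
      intro i hi
      rw [if_neg (Finset.mem_filter.mp hi).2]
    rw [h2, h3, Finset.sum_neg_distrib] at h1
    linarith
  -- bound the first block sum
  have hcard : S.card = m := card_filter_lt m (by omega)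
  have hSx : ∑ i ∈ S, (k i) ^ 2 ≤ (m : ℝ) * (k j) ^ 2 := by
    have := Finset.sum_le_card_nsmul S (fun i => (k i) ^ 2) ((k j) ^ 2)
      (fun i hi => hjmax i hi)
    rw [hcard] at this
    simpa [nsmul_eq_mul] using this
  -- value of Tq
  have htot : ∑ i : Fin (n + 1), (if (i : ℕ) < m then (-1 : ℝ) else 1) * (k i) ^ 2 = 0 := by
    have : ∀ i : Fin (n + 1), (if (i : ℕ) < m then (-1 : ℝ) else 1) * (k i) ^ 2
        = -(if (i : ℕ) < m then (k i) ^ 2 else -((k i) ^ 2)) := by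
      intro i; split <;> ring
    rw [Finset.sum_congr rfl (fun i _ => this i), Finset.sum_neg_distrib, hk, neg_zero]
  have hTq : Tq m j (rmv j k) = (k j) ^ 2 := by
    have h1 := Fin.sum_univ_succAbove
      (fun i => (if (i : ℕ) < m then (-1 : ℝ) else 1) * (k i) ^ 2) j
    rw [htot] at h1
    have h2 : Tq m j (rmv j k)
        = ∑ i : Fin n, (if ((j.succAbove i : ℕ) < m) then (-1 : ℝ) else 1)
          * (k (j.succAbove i)) ^ 2 := rfl
    rw [h2]
    have h3 : (if (j : ℕ) < m then (-1 : ℝ) else 1) = -1 := if_pos hjm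
    rw [h3] at h1
    linarith [h1]
  -- membership in Om
  have hnormk : ‖k‖ ^ 2 = 2 * ∑ i ∈ S, (k i) ^ 2 := by
    rw [norm_sq_eq]
    have h1 := Finset.sum_filter_add_sum_filter_not Finset.univ
      (fun i : Fin (n + 1) => (i : ℕ) < m) (fun i => (k i) ^ 2)
    rw [← h1, ← hsplit]
    ring
  have hOm : rmv j k ∈ Om m j := by
    have h1 : ‖rmv j k‖ ^ 2
        = ∑ i : Fin n, (k (j.succAbove i)) ^ 2 := norm_sq_eq _
    have h2 : ‖k‖ ^ 2 = ∑ i : Fin (n + 1), (k i) ^ 2 := norm_sq_eq k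
    have hsp := Fin.sum_univ_succAbove (fun i => (k i) ^ 2) j
    have hgoal : ‖rmv j k‖ ^ 2
        ≤ 2 * m * Tq m j (rmv j k) := by
      rw [hTq, h1]
      nlinarith [sq_nonneg (k j), hSx, hnormk, h2, hsp]
    exact hgoal
  -- the sign
  refine ⟨j, if k j < 0 then (-1 : ℝ) else 1, by split <;> norm_num, hOm, ?_⟩
  have hσ : (if k j < 0 then (-1 : ℝ) else 1) * Real.sqrt (Tq m j (rmv j k)) = k j := by
    rw [hTq, Real.sqrt_sq_eq_abs]
    split
    · rename_i h; rw [abs_of_neg h]; ring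
    · rename_i h; rw [abs_of_nonneg (not_lt.mp h)]; ring
  rw [Gmap, hσ]
  exact congrArg (WithLp.toLp 2) (Fin.insertNth_self_removeNth j (WithLp.ofLp k))


lemma tube_vol (hn : 1 ≤ n) (μ : Measure (EuclideanSpace ℝ (Fin n)))
    [μ.IsAddHaarMeasure] (u : EuclideanSpace ℝ (Fin n)) (hu : ‖u‖ ≤ 1)
    {β : ℝ} (hβ : 0 < β) :
    μ {q : EuclideanSpace ℝ (Fin n) | ‖q‖ ≤ 2 ∧ ∃ s : ℝ, |s| ≤ 2 ∧ dist q (s • u) < β}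
      ≤ ENNReal.ofReal (9 * 4 ^ n * β ^ (n - 1)) * μ (Metric.ball 0 1) := by
  have hfr : Module.finrank ℝ (EuclideanSpace ℝ (Fin n)) = n := finrank_euclideanSpace_fin
  haveI : Nontrivial (EuclideanSpace ℝ (Fin n)) :=
    Module.nontrivial_of_finrank_pos (R := ℝ) (by rw [hfr]; omega)
  rcases le_or_gt 1 β with h1 | h1
  · -- big β : the set is inside a ball of radius 3
    have hsub : {q : EuclideanSpace ℝ (Fin n) | ‖q‖ ≤ 2 ∧ ∃ s : ℝ, |s| ≤ 2 ∧ dist q (s • u) < β}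
        ⊆ Metric.ball (0 : EuclideanSpace ℝ (Fin n)) 3 := by
      rintro q ⟨hq, -⟩
      rw [Metric.mem_ball, dist_zero_right]
      linarith
    calc μ _ ≤ μ (Metric.ball (0 : EuclideanSpace ℝ (Fin n)) 3) := measure_mono hsub
      _ = ENNReal.ofReal (3 ^ n) * μ (Metric.ball 0 1) := by
          rw [Measure.addHaar_ball μ 0 (by norm_num : (0:ℝ) ≤ 3), hfr]
      _ ≤ ENNReal.ofReal (9 * 4 ^ n * β ^ (n - 1)) * μ (Metric.ball 0 1) := by
          apply mul_le_mul_left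
          apply ENNReal.ofReal_le_ofReal
          have hb : (1:ℝ) ≤ β ^ (n - 1) := by
            calc (1:ℝ) = 1 ^ (n - 1) := (one_pow _).symm
              _ ≤ β ^ (n - 1) := pow_le_pow_left₀ (by norm_num) h1 (n - 1)
          have h34 : (3:ℝ) ^ n ≤ 4 ^ n := pow_le_pow_left₀ (by norm_num) (by norm_num) n
          nlinarith [pow_pos (show (0:ℝ) < 4 by norm_num) n]
  · -- small β : cover by balls along the segment
    set N : ℕ := ⌈(2:ℝ) / β⌉₊ + 1 with hN
    set T : Finset ℤ := Finset.Icc (-(N:ℤ)) (N:ℤ) with hT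
    have hsub : {q : EuclideanSpace ℝ (Fin n) | ‖q‖ ≤ 2 ∧ ∃ s : ℝ, |s| ≤ 2 ∧ dist q (s • u) < β}
        ⊆ ⋃ k ∈ T, Metric.ball ((((k:ℤ):ℝ) * β) • u) (2 * β) := by
      rintro q ⟨-, s, hs, hd⟩
      have hk1 : ((⌊s / β⌋ : ℝ)) ≤ s / β := Int.floor_le _
      have hk2 : s / β < (⌊s / β⌋ : ℝ) + 1 := Int.lt_floor_add_one _
      have habs : |s / β| ≤ 2 / β := by
        rw [abs_div, abs_of_pos hβ]
        exact (div_le_div_iff_of_pos_right hβ).mpr hs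
      have hceil : ((⌈(2:ℝ) / β⌉₊ : ℝ)) < 2 / β + 1 := Nat.ceil_lt_add_one (by positivity)
      have hup : ((⌊s / β⌋ : ℝ)) ≤ (N : ℝ) := by
        have : s / β ≤ 2 / β := le_trans (le_abs_self _) habs
        have h2 : ((⌊s / β⌋ : ℝ)) ≤ 2 / β := le_trans hk1 this
        have h3 : (2:ℝ) / β ≤ (⌈(2:ℝ) / β⌉₊ : ℝ) := Nat.le_ceil _
        push_cast [hN]
        linarith
      have hlo : (-(N:ℝ)) ≤ ((⌊s / β⌋ : ℝ)) := by
        have : -(2 / β) ≤ s / β := by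
          have := neg_abs_le (s / β)
          linarith [habs]
        have h3 : (2:ℝ) / β ≤ (⌈(2:ℝ) / β⌉₊ : ℝ) := Nat.le_ceil _
        push_cast [hN]
        linarith
      refine Set.mem_biUnion (show ⌊s / β⌋ ∈ T from ?_) ?_
      · rw [hT, Finset.mem_Icc]
        constructor
        · exact_mod_cast hlo
        · exact_mod_cast hup
      · rw [Metric.mem_ball]
        have hdist2 : dist (s • u) ((((⌊s / β⌋ : ℤ):ℝ) * β) • u) ≤ β := by
          rw [dist_eq_norm, ← sub_smul, norm_smul]
          have hfl : ((⌊s / β⌋ : ℝ)) * β ≤ s := by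
            have h5 := mul_le_mul_of_nonneg_right hk1 hβ.le
            rwa [div_mul_cancel₀ _ hβ.ne'] at h5
          have hfu : s < (((⌊s / β⌋ : ℝ)) + 1) * β := by
            have h5 := mul_lt_mul_of_pos_right hk2 hβ
            rwa [div_mul_cancel₀ _ hβ.ne'] at h5
          have h4 : |s - ((⌊s / β⌋ : ℝ)) * β| ≤ β := by
            rw [abs_le]
            constructor
            · nlinarith
            · nlinarith
          calc ‖s - ((⌊s / β⌋ : ℝ)) * β‖ * ‖u‖ ≤ β * 1 := by
                apply mul_le_mul ?_ hu (norm_nonneg _) hβ.le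
                rw [Real.norm_eq_abs]; exact h4
            _ = β := mul_one β
        calc dist q ((((⌊s / β⌋ : ℤ):ℝ) * β) • u)
            ≤ dist q (s • u) + dist (s • u) ((((⌊s / β⌋ : ℤ):ℝ) * β) • u) := dist_triangle _ _ _
          _ < β + β := by
              apply add_lt_add_of_lt_of_le hd hdist2
          _ = 2 * β := by ring
    have hcard : T.card = 2 * N + 1 := by
      rw [hT, Int.card_Icc]
      omega
    calc μ _ ≤ μ (⋃ k ∈ T, Metric.ball ((((k:ℤ):ℝ) * β) • u) (2 * β)) := measure_mono hsub
      _ ≤ ∑ k ∈ T, μ (Metric.ball ((((k:ℤ):ℝ) * β) • u) (2 * β)) :=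
          measure_biUnion_finset_le T _
      _ = ∑ k ∈ T, ENNReal.ofReal ((2 * β) ^ n) * μ (Metric.ball 0 1) := by
          apply Finset.sum_congr rfl
          intro k _
          rw [Measure.addHaar_ball μ _ (by positivity : (0:ℝ) ≤ 2 * β), hfr]
      _ = ((2 * N + 1 : ℕ) : ℝ≥0∞) * (ENNReal.ofReal ((2 * β) ^ n) * μ (Metric.ball 0 1)) := by
          rw [Finset.sum_const, hcard, nsmul_eq_mul]
      _ ≤ ENNReal.ofReal (9 * 4 ^ n * β ^ (n - 1)) * μ (Metric.ball 0 1) := by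
          rw [← mul_assoc]
          apply mul_le_mul_left
          rw [← ENNReal.ofReal_natCast (2 * N + 1), ← ENNReal.ofReal_mul (by positivity)]
          apply ENNReal.ofReal_le_ofReal
          have hceil : ((⌈(2:ℝ) / β⌉₊ : ℝ)) < 2 / β + 1 := Nat.ceil_lt_add_one (by positivity)
          have hNr : (N : ℝ) < 2 / β + 2 := by
            push_cast [hN]; linarith
          have hβn : β ^ n = β * β ^ (n - 1) := by
            rw [← pow_succ']
            congr 1
            omega
          have h2N : ((2 * N + 1 : ℕ) : ℝ) * β ≤ 9 := by
            have hNb : ((N:ℝ)) * β < 2 + 2 * β := by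
              have h6 := mul_lt_mul_of_pos_right hNr hβ
              have h7 : (2 / β + 2) * β = 2 + 2 * β := by field_simp
              rw [h7] at h6
              exact h6
            have h8 : ((2 * N + 1 : ℕ) : ℝ) = 2 * (N:ℝ) + 1 := by push_cast; ring
            rw [h8]
            nlinarith [hNb, hβ, h1]
          calc ((2 * N + 1 : ℕ) : ℝ) * (2 * β) ^ n
              = (((2 * N + 1 : ℕ) : ℝ) * β) * (2 ^ n * β ^ (n - 1)) := by
                rw [mul_pow, hβn]; ring
            _ ≤ 9 * (2 ^ n * β ^ (n - 1)) := by
                apply mul_le_mul_of_nonneg_right h2N (by positivity)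
            _ ≤ 9 * 4 ^ n * β ^ (n - 1) := by
                have : (2:ℝ) ^ n ≤ 4 ^ n :=
                  pow_le_pow_left₀ (by norm_num) (by norm_num) n
                nlinarith [pow_nonneg (show (0:ℝ) ≤ β from hβ.le) (n - 1)]

end Stmt13Aux

open Stmt13Aux in
/-- Let `d ≥ 3`, `1 ≤ m ≤ d-1`, `F` the truncated cone
`{k : Q(k) = 0, |k| ≤ √2}` for the signature-`(m, d-m)` form `Q`, and for `0 ≠ ω ∈ F`
let `D(ω) = {tω' : 0 < |t| ≤ 1}` be the pair of rays through `ω` (rescaled to the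
truncated cone).  There is a constant `c` (depending only on `d, m`) such that for all
`β > 0`, the `(d-1)`-dimensional Hausdorff measure of `U_β(D(ω)) ∩ F` is at most
`c β^{d-2}`. -/
theorem stmt13 (d m : ℕ) (hd : 3 ≤ d) (hm : 1 ≤ m) (hmd : m ≤ d - 1) :
    ∃ c : ℝ, 0 < c ∧
      ∀ ω : EuclideanSpace ℝ (Fin d),
        ω ∈ {k : EuclideanSpace ℝ (Fin d) |
            (∑ i : Fin d, if (i : ℕ) < m then (k i) ^ 2 else -((k i) ^ 2)) = 0 ∧
            ‖k‖ ≤ Real.sqrt 2} →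
        ω ≠ 0 →
        ∀ β : ℝ, 0 < β →
          μH[(d : ℝ) - 1]
            (Metric.thickening β {p : EuclideanSpace ℝ (Fin d) |
                ∃ t : ℝ, t ≠ 0 ∧ ‖p‖ ≤ Real.sqrt 2 ∧ p = t • ω} ∩
              {k : EuclideanSpace ℝ (Fin d) |
                (∑ i : Fin d, if (i : ℕ) < m then (k i) ^ 2 else -((k i) ^ 2)) = 0 ∧
                ‖k‖ ≤ Real.sqrt 2}) ≤
            ENNReal.ofReal (c * β ^ (d - 2)) := by
  classical
  obtain ⟨n, rfl⟩ : ∃ n, d = n + 1 := ⟨d - 1, by omega⟩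
  have hn : 1 ≤ n := by omega
  have hmn : m ≤ n := by omega
  have hfr : Module.finrank ℝ (EuclideanSpace ℝ (Fin n)) = n := finrank_euclideanSpace_fin
  haveI hHaar : (μH[(n:ℝ)] : Measure (EuclideanSpace ℝ (Fin n))).IsAddHaarMeasure := by
    rw [show ((n:ℝ)) = ((Module.finrank ℝ (EuclideanSpace ℝ (Fin n)) : ℕ) : ℝ) by rw [hfr]]
    exact isAddHaarMeasure_hausdorffMeasure
  set μP : Measure (EuclideanSpace ℝ (Fin n)) := μH[(n:ℝ)] with hμP
  set VB : ℝ≥0∞ := μP (Metric.ball 0 1) with hVB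
  have hVB0 : VB ≠ 0 := (measure_ball_pos μP 0 one_pos).ne'
  have hVBtop : VB ≠ ⊤ := (measure_ball_lt_top).ne
  set v : ℝ := VB.toReal with hv
  have hv0 : 0 < v := ENNReal.toReal_pos hVB0 hVBtop
  set Kr : ℝ := ((3 * (m + 1) : ℕ) : ℝ) with hKr
  have hKr0 : 0 < Kr := by rw [hKr]; positivity
  refine ⟨(2 * (n + 1)) * Kr ^ n * (9 * 4 ^ n) * v, by positivity, ?_⟩
  intro ω hω hω0 β hβ
  have hωn : 0 < ‖ω‖ := norm_pos_iff.mpr hω0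
  -- rewrite the exponents
  have hexp : ((n + 1 : ℕ) : ℝ) - 1 = (n : ℝ) := by push_cast; ring
  rw [hexp, show n + 1 - 2 = n - 1 from by omega]
  -- notation for the sets
  set F : Set (EuclideanSpace ℝ (Fin (n + 1))) :=
    {k : EuclideanSpace ℝ (Fin (n + 1)) |
      (∑ i : Fin (n + 1), if (i : ℕ) < m then (k i) ^ 2 else -((k i) ^ 2)) = 0 ∧
      ‖k‖ ≤ Real.sqrt 2} with hF
  set D : Set (EuclideanSpace ℝ (Fin (n + 1))) :=
    {p : EuclideanSpace ℝ (Fin (n + 1)) |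
      ∃ t : ℝ, t ≠ 0 ∧ ‖p‖ ≤ Real.sqrt 2 ∧ p = t • ω} with hD
  set A : Set (EuclideanSpace ℝ (Fin (n + 1))) := Metric.thickening β D ∩ F with hA
  -- sign function
  set sg : Bool → ℝ := fun b => if b then 1 else -1 with hsg
  have hsgsq : ∀ b, (sg b) ^ 2 = 1 := by intro b; rw [hsg]; cases b <;> norm_num
  -- parameter sets
  set Bset : Fin (n + 1) × Bool → Set (EuclideanSpace ℝ (Fin n)) :=
    fun p => Om m p.1 ∩ (Gmap m p.1 (sg p.2)) ⁻¹' A with hBset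
  -- covering
  have hcover : A ⊆ ⋃ p ∈ (Finset.univ : Finset (Fin (n + 1) × Bool)),
      Gmap m p.1 (sg p.2) '' Bset p := by
    intro k hk
    have hkF : k ∈ F := hk.2
    obtain ⟨j, σ, hσ, hOm, hG⟩ := cover hm hmn k hkF.1
    have hσcases : σ = 1 ∨ σ = -1 := by
      have h0 : (σ - 1) * (σ + 1) = 0 := by nlinarith [hσ]
      rcases mul_eq_zero.mp h0 with h | h
      · left; linarith
      · right; linarith
    have : ∃ b : Bool, sg b = σ := by
      rcases hσcases with h | h
      · exact ⟨true, by rw [hsg, h]; norm_num⟩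
      · exact ⟨false, by rw [hsg, h]; norm_num⟩
    obtain ⟨b, hb⟩ := this
    apply Set.mem_biUnion (Finset.mem_univ (j, b))
    refine ⟨rmv j k, ⟨hOm, ?_⟩, by rw [hb]; exact hG⟩
    show Gmap m j (sg b) (rmv j k) ∈ A
    rw [hb, hG]
    exact hk
  -- the tube in parameter space
  set Tube : Set (EuclideanSpace ℝ (Fin n)) :=
    {q : EuclideanSpace ℝ (Fin n) | ‖q‖ ≤ 2 ∧
      ∃ s : ℝ, |s| ≤ 2 ∧ dist q (s • (‖ω‖⁻¹ • rmv (0 : Fin (n+1)) ω)) < β} with hTube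
  have hsqrt2 : Real.sqrt 2 ≤ 2 := by
    nlinarith [Real.sq_sqrt (show (0:ℝ) ≤ 2 by norm_num), Real.sqrt_nonneg 2]
  -- each Bset is contained in a tube (depending on j)
  have hBsub : ∀ (j : Fin (n + 1)) (b : Bool),
      Bset (j, b) ⊆ {q : EuclideanSpace ℝ (Fin n) | ‖q‖ ≤ 2 ∧
        ∃ s : ℝ, |s| ≤ 2 ∧ dist q (s • (‖ω‖⁻¹ • rmv j ω)) < β} := by
    intro j b q hq
    obtain ⟨hqOm, hqA⟩ := hq
    set k : EuclideanSpace ℝ (Fin (n + 1)) := Gmap m j (sg b) q with hk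
    have hkA : k ∈ A := hqA
    have hrq : rmv j k = q := by
      refine PiLp.ext fun i => ?_
      show k (j.succAbove i) = q i
      rw [hk, Gmap, WithLp.ofLp_toLp, Fin.insertNth_apply_succAbove]
    have hkF : k ∈ F := hkA.2
    constructor
    · -- norm bound
      have h1 : ‖q‖ ≤ ‖k‖ := by rw [← hrq]; exact removeNth_norm_le j k
      have h2 : ‖k‖ ≤ Real.sqrt 2 := hkF.2
      linarith
    · -- find the parameter s
      obtain ⟨z, hzD, hdz⟩ := Metric.mem_thickening_iff.mp hkA.1
      obtain ⟨t, ht0, hzn, hzω⟩ := hzD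
      refine ⟨t * ‖ω‖, ?_, ?_⟩
      · rw [abs_mul, abs_of_pos hωn]
        calc |t| * ‖ω‖ = ‖t • ω‖ := by rw [norm_smul, Real.norm_eq_abs]
          _ = ‖z‖ := by rw [hzω]
          _ ≤ Real.sqrt 2 := hzn
          _ ≤ 2 := hsqrt2
      · have hsmul : (t * ‖ω‖) • (‖ω‖⁻¹ • rmv j ω) = t • rmv j ω := by
          rw [smul_smul, mul_assoc, mul_inv_cancel₀ hωn.ne', mul_one]
        rw [hsmul]
        have hzr : rmv j z = t • rmv j ω := by rw [hzω]; rfl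
        calc dist q (t • rmv j ω) = dist (rmv j k) (rmv j z) := by rw [hrq, hzr]
          _ ≤ dist k z := removeNth_dist_le j k z
          _ < β := hdz
  -- tube measure bound (uniform in j)
  have htube : ∀ (j : Fin (n + 1)),
      μP {q : EuclideanSpace ℝ (Fin n) | ‖q‖ ≤ 2 ∧
        ∃ s : ℝ, |s| ≤ 2 ∧ dist q (s • (‖ω‖⁻¹ • rmv j ω)) < β}
      ≤ ENNReal.ofReal (9 * 4 ^ n * β ^ (n - 1)) * VB := by
    intro j
    apply tube_vol hn μP
    · rw [norm_smul, Real.norm_eq_abs, abs_of_nonneg (inv_nonneg.mpr hωn.le)]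
      calc ‖ω‖⁻¹ * ‖rmv j ω‖ ≤ ‖ω‖⁻¹ * ‖ω‖ :=
          mul_le_mul_of_nonneg_left (removeNth_norm_le j ω) (inv_nonneg.mpr hωn.le)
        _ = 1 := inv_mul_cancel₀ hωn.ne'
    · exact hβ
  -- lipschitz image bound for each piece
  have himg : ∀ (j : Fin (n + 1)) (b : Bool),
      μH[(n:ℝ)] (Gmap m j (sg b) '' Bset (j, b))
        ≤ (((3 * (m + 1) : ℕ) : NNReal) : ℝ≥0∞) ^ (n : ℝ)
          * (ENNReal.ofReal (9 * 4 ^ n * β ^ (n - 1)) * VB) := by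
    intro j b
    have hlip : LipschitzOnWith ((3 * (m + 1) : ℕ) : NNReal) (Gmap m j (sg b)) (Bset (j, b)) :=
      (lipschitz_Gmap hm j (hsgsq b)).mono Set.inter_subset_left
    calc μH[(n:ℝ)] (Gmap m j (sg b) '' Bset (j, b))
        ≤ (((3 * (m + 1) : ℕ) : NNReal) : ℝ≥0∞) ^ (n : ℝ) * μH[(n:ℝ)] (Bset (j, b)) :=
          hlip.hausdorffMeasure_image_le (by positivity)
      _ ≤ (((3 * (m + 1) : ℕ) : NNReal) : ℝ≥0∞) ^ (n : ℝ)
          * (ENNReal.ofReal (9 * 4 ^ n * β ^ (n - 1)) * VB) := by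
          apply mul_le_mul_right
          calc μH[(n:ℝ)] (Bset (j, b))
              ≤ μH[(n:ℝ)] {q : EuclideanSpace ℝ (Fin n) | ‖q‖ ≤ 2 ∧
                  ∃ s : ℝ, |s| ≤ 2 ∧ dist q (s • (‖ω‖⁻¹ • rmv j ω)) < β} :=
                measure_mono (hBsub j b)
            _ ≤ ENNReal.ofReal (9 * 4 ^ n * β ^ (n - 1)) * VB := htube j
  -- put everything together
  calc μH[(n:ℝ)] A
      ≤ μH[(n:ℝ)] (⋃ p ∈ (Finset.univ : Finset (Fin (n + 1) × Bool)),
          Gmap m p.1 (sg p.2) '' Bset p) := measure_mono hcover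
    _ ≤ ∑ p ∈ (Finset.univ : Finset (Fin (n + 1) × Bool)),
          μH[(n:ℝ)] (Gmap m p.1 (sg p.2) '' Bset p) := measure_biUnion_finset_le _ _
    _ ≤ ∑ _p ∈ (Finset.univ : Finset (Fin (n + 1) × Bool)),
          (((3 * (m + 1) : ℕ) : NNReal) : ℝ≥0∞) ^ (n : ℝ)
            * (ENNReal.ofReal (9 * 4 ^ n * β ^ (n - 1)) * VB) := by
        apply Finset.sum_le_sum
        intro p _
        exact himg p.1 p.2
    _ = ((2 * (n + 1) : ℕ) : ℝ≥0∞) * ((((3 * (m + 1) : ℕ) : NNReal) : ℝ≥0∞) ^ (n : ℝ)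
            * (ENNReal.ofReal (9 * 4 ^ n * β ^ (n - 1)) * VB)) := by
        rw [Finset.sum_const, nsmul_eq_mul, Finset.card_univ]
        congr 1
        rw [Fintype.card_prod, Fintype.card_fin, Fintype.card_bool]
        ring
    _ ≤ ENNReal.ofReal ((2 * (n + 1)) * Kr ^ n * (9 * 4 ^ n) * v * β ^ (n - 1)) := by
        have hKcast : (((3 * (m + 1) : ℕ) : NNReal) : ℝ≥0∞) ^ (n : ℝ)
            = ENNReal.ofReal (Kr ^ n) := by
          rw [ENNReal.rpow_natCast, hKr, ENNReal.ofReal_pow (by positivity),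
            ENNReal.ofReal_natCast]
          norm_cast
        have hVBeq : VB = ENNReal.ofReal v := (ENNReal.ofReal_toReal hVBtop).symm
        rw [hKcast, hVBeq, ← ENNReal.ofReal_natCast (2 * (n + 1)),
          ← ENNReal.ofReal_mul (by positivity), ← ENNReal.ofReal_mul (by positivity),
          ← ENNReal.ofReal_mul (by positivity)]
        apply ENNReal.ofReal_le_ofReal
        have hc : ((2 * (n + 1) : ℕ) : ℝ) = 2 * ((n:ℝ) + 1) := by push_cast; ring
        rw [hc]
        have hβn : (0:ℝ) ≤ β ^ (n - 1) := by positivity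
        nlinarith [pow_nonneg hKr0.le n, hv0.le, hβn,
          pow_nonneg (show (0:ℝ) ≤ 4 by norm_num) n]
end

section
/- Let d ≥ 3, 1 ≤ m ≤ d−1, and F the truncated cone as above. For ω, ω' ∈ F nonzero, with unit normals n(ω) = ±(θ₁, −θ₂)/√2 at ω = (rθ₁, rθ₂), if ω' = (t'θ₁', t'θ₂') satisfies |(θ₁', φ₂') ± (θ₁, θ₂)| ≥ β for both choices of sign, then |sin θ(n(ω), n(ω'))| ≥ β/(2√2), where θ denotes the angle between the two normal directions. -/
/-- On the truncated cone `F = {(rθ₁, rθ₂)}`, the unit normal direction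
at `(rθ₁, rθ₂)` is `±(θ₁, -θ₂)/√2`.  If `|(θ₁', θ₂') ± (θ₁, θ₂)| ≥ β` for both choices
of sign, then `|sin θ(n(ω), n(ω'))| ≥ β/(2√2)`. -/
theorem stmt14 (d m : ℕ) (hd : 3 ≤ d) (hm : 1 ≤ m) (hmd : m ≤ d - 1)
    (θ₁ θ₁' : EuclideanSpace ℝ (Fin m)) (θ₂ θ₂' : EuclideanSpace ℝ (Fin (d - m)))
    (h₁ : ‖θ₁‖ = 1) (h₂ : ‖θ₂‖ = 1) (h₁' : ‖θ₁'‖ = 1) (h₂' : ‖θ₂'‖ = 1)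
    (β : ℝ) (hβ : 0 < β)
    (hplus : β ≤ ‖(WithLp.equiv 2 (EuclideanSpace ℝ (Fin m) × EuclideanSpace ℝ (Fin (d - m)))).symm
        (θ₁' + θ₁, θ₂' + θ₂)‖)
    (hminus : β ≤ ‖(WithLp.equiv 2 (EuclideanSpace ℝ (Fin m) × EuclideanSpace ℝ (Fin (d - m)))).symm
        (θ₁' - θ₁, θ₂' - θ₂)‖) :
    β / (2 * Real.sqrt 2) ≤
      Real.sin (InnerProductGeometry.angle
        ((Real.sqrt 2)⁻¹ •
          (WithLp.equiv 2 (EuclideanSpace ℝ (Fin m) × EuclideanSpace ℝ (Fin (d - m)))).symm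
            (θ₁, -θ₂))
        ((Real.sqrt 2)⁻¹ •
          (WithLp.equiv 2 (EuclideanSpace ℝ (Fin m) × EuclideanSpace ℝ (Fin (d - m)))).symm
            (θ₁', -θ₂'))) := by
  set i1 : ℝ := inner ℝ θ₁' θ₁ with hi1
  set i2 : ℝ := inner ℝ θ₂' θ₂ with hi2
  set c : ℝ := (i1 + i2) / 2 with hc
  -- norms squared of the shifted vectors
  have hps : β ^ 2 ≤ 4 + 2 * i1 + 2 * i2 := by
    have := pow_le_pow_left₀ hβ.le hplus 2
    rw [WithLp.prod_norm_sq_eq_of_L2] at this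
    simp only [WithLp.equiv_symm_apply, WithLp.toLp_fst, WithLp.toLp_snd] at this
    rw [norm_add_sq_real, norm_add_sq_real, h₁, h₂, h₁', h₂'] at this
    linarith [this]
  have hms : β ^ 2 ≤ 4 - 2 * i1 - 2 * i2 := by
    have := pow_le_pow_left₀ hβ.le hminus 2
    rw [WithLp.prod_norm_sq_eq_of_L2] at this
    simp only [WithLp.equiv_symm_apply, WithLp.toLp_fst, WithLp.toLp_snd] at this
    rw [norm_sub_sq_real, norm_sub_sq_real, h₁, h₂, h₁', h₂'] at this
    linarith [this]
  have hp : β ^ 2 / 4 ≤ 1 + c := by rw [hc]; linarith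
  have hmn : β ^ 2 / 4 ≤ 1 - c := by rw [hc]; linarith
  have h1c : 0 ≤ 1 + c := le_trans (by positivity) hp
  have h2c : 0 ≤ 1 - c := le_trans (by positivity) hmn
  have hkey : β ^ 2 / 8 ≤ 1 - c ^ 2 := by
    nlinarith [mul_nonneg (sub_nonneg.2 hp) h2c, mul_nonneg (sub_nonneg.2 hmn) h1c]
  have hs2 : (0:ℝ) < Real.sqrt 2 := by positivity
  -- compute the angle
  have hnorm : ∀ (a : EuclideanSpace ℝ (Fin m)) (b : EuclideanSpace ℝ (Fin (d - m))),
      ‖a‖ = 1 → ‖b‖ = 1 →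
      ‖(Real.sqrt 2)⁻¹ •
        (WithLp.equiv 2 (EuclideanSpace ℝ (Fin m) × EuclideanSpace ℝ (Fin (d - m)))).symm
          (a, -b)‖ = 1 := by
    intro a b ha hb
    rw [norm_smul, WithLp.prod_norm_eq_of_L2]
    simp only [WithLp.equiv_symm_apply, WithLp.toLp_fst, WithLp.toLp_snd, norm_neg, ha, hb]
    rw [show (1:ℝ)^2 + 1^2 = 2 by norm_num, Real.norm_eq_abs, abs_inv, abs_of_nonneg hs2.le,
      inv_mul_cancel₀ hs2.ne']
  have hinner : (inner ℝ
      ((Real.sqrt 2)⁻¹ •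
        (WithLp.equiv 2 (EuclideanSpace ℝ (Fin m) × EuclideanSpace ℝ (Fin (d - m)))).symm
          (θ₁, -θ₂))
      ((Real.sqrt 2)⁻¹ •
        (WithLp.equiv 2 (EuclideanSpace ℝ (Fin m) × EuclideanSpace ℝ (Fin (d - m)))).symm
          (θ₁', -θ₂')) : ℝ) = c := by
    rw [real_inner_smul_left, real_inner_smul_right, WithLp.prod_inner_apply]
    simp only [WithLp.equiv_symm_apply, WithLp.toLp_fst, WithLp.toLp_snd, inner_neg_neg]
    have hhalf : (Real.sqrt 2)⁻¹ * (Real.sqrt 2)⁻¹ = (2:ℝ)⁻¹ := by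
      rw [← mul_inv]
      norm_num [Real.mul_self_sqrt]
    rw [real_inner_comm θ₁' θ₁, real_inner_comm θ₂' θ₂, ← hi1, ← hi2, hc,
      ← mul_assoc, hhalf]
    ring
  rw [InnerProductGeometry.angle, hinner, hnorm θ₁ θ₂ h₁ h₂, hnorm θ₁' θ₂' h₁' h₂']
  rw [mul_one, div_one, Real.sin_arccos]
  have h1c2 : (0:ℝ) ≤ 1 - c ^ 2 := le_trans (by positivity) hkey
  rw [show (2:ℝ) * Real.sqrt 2 = Real.sqrt 8 by
    rw [show (8:ℝ) = 4 * 2 by norm_num, Real.sqrt_mul (by norm_num),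
      show Real.sqrt 4 = 2 by
        rw [show (4:ℝ) = 2 ^ 2 by norm_num, Real.sqrt_sq (by norm_num)]]]
  rw [Real.le_sqrt (by positivity) h1c2, div_pow, Real.sq_sqrt (by norm_num : (0:ℝ) ≤ 8)]
  linarith [hkey]
end
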